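/- arXiv:1409.6961 — 6 statements merged into one kernel-verified Lean document; each statement's English description precedes it below -/
import Mathlib

section
/- Let q be a power of a prime, m a positive integer, N a positive divisor of q^m - 1, and c an arbitrary element of F_q. Then Z_{q,m,N}(c) = (1/q)·( ((q^m - 1)/N)·φ(N) + f_0(N, c, Δ) ). -/
open scoped BigOperators
open scoped Classical

/-- The canonical additive character of a finite field `F` of characteristic `p`:
`z ↦ exp(2πi·Tr_{F/F_p}(z)/p)`. -/
noncomputable def canChar (p : ℕ) (F : Type) [Field F] [Fintype F] [CharP F p] : F → ℂ :=
  fun z => Complex.exp (2 * Real.pi * Complex.I *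
    (((@Algebra.trace (ZMod p) F _ _ (ZMod.algebra F p)) z).val : ℂ) / (p : ℂ))

/-- The Gaussian period `η_k^{(d, #L)}` attached to a generator `α` of `Lˣ`:
the sum of `χ` over the cyclotomic class `α^k⟨α^d⟩`. -/
noncomputable def gaussPeriod (p : ℕ) (L : Type) [Field L] [Fintype L] [CharP L p]
    (α : Lˣ) (d : ℕ) (k : ℤ) : ℂ :=
  ∑ x ∈ Finset.univ.filter (fun x : Lˣ => ∃ i : ℕ, x = α ^ k * (α ^ d) ^ i),
    canChar p L (x : L)

/-- `Δ_k(N) = ∑_{d ∣ N} μ(d)·η_k^{(d, #L)}`. -/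
noncomputable def DeltaSum (p : ℕ) (L : Type) [Field L] [Fintype L] [CharP L p]
    (α : Lˣ) (N : ℕ) (k : ℤ) : ℂ :=
  ∑ d ∈ N.divisors, ((ArithmeticFunction.moebius d : ℤ) : ℂ) * gaussPeriod p L α d k

/-- `ξ` is `N`-free (w.r.t. the fixed generator `α`): `ξ = α^k` for some `k` coprime to `N`. -/
def IsNFree {G : Type} [Group G] (α ξ : G) (N : ℕ) : Prop :=
  ∃ k : ℕ, Nat.Coprime k N ∧ ξ = α ^ k

/-- `Z_{q,m,N}(c)`: the number of `N`-free elements of `Lˣ` with trace (to `K`) equal to `c`. -/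
noncomputable def Zcount (K L : Type) [Field K] [Field L] [Algebra K L]
    (α : Lˣ) (N : ℕ) (c : K) : ℕ :=
  {ξ : Lˣ | IsNFree α ξ N ∧ Algebra.trace K L (ξ : L) = c}.ncard

/-- `P_{q,m,N}(c)`: the number of elements of `Lˣ` of multiplicative order exactly `N`
with trace (to `K`) equal to `c`. -/
noncomputable def Pcount (K L : Type) [Field K] [Field L] [Algebra K L]
    (N : ℕ) (c : K) : ℕ :=
  {ξ : Lˣ | orderOf ξ = N ∧ Algebra.trace K L (ξ : L) = c}.ncard

/-- The radical of `n`: the product of the distinct prime factors of `n`. -/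
def Rad (n : ℕ) : ℕ := ∏ ℓ ∈ n.primeFactors, ℓ

/-- `f_k(N, c, Δ) = ∑_{i=0}^{q-2} conj(χ_q(β^i·c))·Δ_{Qi+k}(N)`, where `β ∈ K` corresponds
to `α^Q` (a generator of `Kˣ`). -/
noncomputable def fsum (p : ℕ) (K L : Type) [Field K] [Fintype K] [CharP K p]
    [Field L] [Fintype L] [CharP L p]
    (α : Lˣ) (β : K) (q Q N : ℕ) (c : K) (k : ℤ) : ℂ :=
  ∑ i ∈ Finset.range (q - 1),
    (starRingEnd ℂ) (canChar p K (β ^ i * c)) * DeltaSum p L α N ((Q * i : ℕ) + k)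


section MyHelpers
section CanChar
variable {p : ℕ} [Fact p.Prime] {F : Type} [Field F] [Fintype F] [CharP F p]

lemma exp_nat_mod (hp : (p:ℕ) ≠ 0) (a : ℕ) :
    Complex.exp (2 * Real.pi * Complex.I * (a:ℂ) / p)
      = Complex.exp (2 * Real.pi * Complex.I * ((a % p : ℕ):ℂ) / p) := by
  have hpC : (p:ℂ) ≠ 0 := Nat.cast_ne_zero.mpr hp
  have h1 : (a:ℂ) = ((a % p : ℕ):ℂ) + (p:ℂ) * ((a / p : ℕ):ℂ) := by
    rw [← Nat.cast_mul, ← Nat.cast_add, Nat.mod_add_div a p]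
  rw [h1]
  have h2 : 2 * Real.pi * Complex.I * (((a % p : ℕ):ℂ) + (p:ℂ) * ((a / p : ℕ):ℂ)) / p
      = 2 * Real.pi * Complex.I * ((a % p : ℕ):ℂ) / p
        + (((a / p : ℕ) : ℤ):ℂ) * (2 * Real.pi * Complex.I) := by
    rw [Int.cast_natCast]
    field_simp
  rw [h2, Complex.exp_add, Complex.exp_int_mul_two_pi_mul_I, mul_one]

lemma canChar_add (x y : F) : canChar p F (x + y) = canChar p F x * canChar p F y := by
  have hp : (p:ℕ) ≠ 0 := (Fact.out : p.Prime).ne_zero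
  unfold canChar
  rw [map_add]
  set u := (@Algebra.trace (ZMod p) F _ _ (ZMod.algebra F p)) x
  set v := (@Algebra.trace (ZMod p) F _ _ (ZMod.algebra F p)) y
  haveI : NeZero p := ⟨hp⟩
  rw [ZMod.val_add, ← exp_nat_mod hp, ← Complex.exp_add]
  congr 1
  push_cast
  ring

lemma canChar_zero : canChar p F 0 = 1 := by
  have hp : (p:ℕ) ≠ 0 := (Fact.out : p.Prime).ne_zero
  haveI : NeZero p := ⟨hp⟩
  unfold canChar
  rw [map_zero]
  simp

lemma canChar_neg_mul (x : F) : canChar p F (-x) * canChar p F x = 1 := by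
  rw [← canChar_add, neg_add_cancel, canChar_zero]

lemma canChar_ne_zero (x : F) : canChar p F x ≠ 0 := Complex.exp_ne_zero _

lemma canChar_conj (x : F) : (starRingEnd ℂ) (canChar p F x) = canChar p F (-x) := by
  have hx : (starRingEnd ℂ) (canChar p F x) * canChar p F x = 1 := by
    unfold canChar
    rw [← Complex.exp_conj, ← Complex.exp_add]
    have : (starRingEnd ℂ) (2 * Real.pi * Complex.I *
        (((@Algebra.trace (ZMod p) F _ _ (ZMod.algebra F p)) x).val : ℂ) / (p : ℂ))
      = -(2 * Real.pi * Complex.I *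
        (((@Algebra.trace (ZMod p) F _ _ (ZMod.algebra F p)) x).val : ℂ) / (p : ℂ)) := by
      simp only [map_div₀, map_mul, Complex.conj_I, Complex.conj_natCast, map_ofNat,
        Complex.conj_ofReal]
      ring
    rw [this, neg_add_cancel, Complex.exp_zero]
  exact mul_right_cancel₀ (canChar_ne_zero x) (hx.trans (canChar_neg_mul x).symm)

end CanChar

section CanChar2
variable (p : ℕ) [Fact p.Prime] (F : Type) [Field F] [Fintype F] [CharP F p]

lemma canChar_exists_ne_one : ∃ t : F, canChar p F t ≠ 1 := by
  have hp : p.Prime := Fact.out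
  haveI : NeZero p := ⟨hp.ne_zero⟩
  have hchar : ringChar F = p := ringChar.eq F p
  obtain ⟨t, ht⟩ : ∃ t : F,
      (@Algebra.trace (ZMod p) F _ _ (ZMod.algebra F p)) t ≠ 0 := by
    subst hchar
    obtain ⟨b, hb⟩ := @FiniteField.trace_to_zmod_nondegenerate F _ _
      (ZMod.algebra F (ringChar F)) 1 one_ne_zero
    exact ⟨b, by simpa using hb⟩
  refine ⟨t, ?_⟩
  unfold canChar
  set v := ((@Algebra.trace (ZMod p) F _ _ (ZMod.algebra F p)) t).val with hv
  have hvp : v < p := ZMod.val_lt _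
  have hv0 : v ≠ 0 := fun h => ht ((ZMod.val_eq_zero _).mp h)
  intro h
  rw [Complex.exp_eq_one_iff] at h
  obtain ⟨n, hn⟩ := h
  have hpC : (p:ℂ) ≠ 0 := Nat.cast_ne_zero.mpr hp.ne_zero
  have h2 : (v:ℂ) = (n:ℂ) * p := by
    have h2pi : (2 * (Real.pi:ℂ) * Complex.I) ≠ 0 := by
      simp [Real.pi_ne_zero, Complex.I_ne_zero, Complex.ofReal_ne_zero]
    field_simp at hn
    -- hn : 2 * π * I * v = n * (2 * π * I) * p
    have : (2 * (Real.pi:ℂ) * Complex.I) * (v:ℂ)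
        = (2 * (Real.pi:ℂ) * Complex.I) * ((n:ℂ) * p) := by
      rw [hn]; ring
    exact mul_left_cancel₀ h2pi this
  have h3 : (v:ℤ) = n * p := by exact_mod_cast h2
  have : (p:ℤ) ∣ (v:ℤ) := ⟨n, by rw [h3]; ring⟩
  have : p ∣ v := by exact_mod_cast this
  exact absurd (Nat.le_of_dvd (Nat.pos_of_ne_zero hv0) this) (not_le.mpr hvp)

lemma sum_canChar : ∑ x : F, canChar p F x = 0 := by
  obtain ⟨t, ht⟩ := canChar_exists_ne_one p F
  have key : canChar p F t * ∑ x : F, canChar p F x = ∑ x : F, canChar p F x := by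
    rw [Finset.mul_sum]
    simp_rw [← canChar_add]
    exact Fintype.sum_equiv (Equiv.addLeft t) _ _ (fun x => rfl)
  by_contra hs
  exact ht (mul_right_cancel₀ hs (key.trans (one_mul _).symm))

lemma sum_canChar_mul (a : F) :
    ∑ b : F, canChar p F (b * a) = if a = 0 then (Fintype.card F : ℂ) else 0 := by
  split_ifs with h
  · subst h; simp [canChar_zero]
  · rw [← sum_canChar p F]
    exact Fintype.sum_equiv (Equiv.mulRight₀ a h) _ _ (fun x => rfl)

end CanChar2

section Compat
variable (p : ℕ) [Fact p.Prime] (K L : Type) [Field K] [Fintype K] [CharP K p]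
  [Field L] [Fintype L] [CharP L p] [Algebra K L]

lemma canChar_compat (b : K) (x : L) :
    canChar p K (b * Algebra.trace K L x) = canChar p L (algebraMap K L b * x) := by
  letI iK : Algebra (ZMod p) K := ZMod.algebra K p
  letI iL : Algebra (ZMod p) L := ZMod.algebra L p
  haveI : IsScalarTower (ZMod p) K L :=
    IsScalarTower.of_algebraMap_eq' (Subsingleton.elim _ _)
  unfold canChar
  congr 2
  rw [← Algebra.trace_trace (S := K) (x := algebraMap K L b * x)]
  congr 1
  rw [← Algebra.smul_def, map_smul, smul_eq_mul]
end Compat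

lemma moebius_indicator {N : ℕ} (hN : N ≠ 0) (k : ℕ) :
    (∑ d ∈ N.divisors, if d ∣ k then ((ArithmeticFunction.moebius d : ℤ):ℂ) else 0)
      = if Nat.Coprime k N then 1 else 0 := by
  have hZ : (∑ d ∈ N.divisors, if d ∣ k then (ArithmeticFunction.moebius d : ℤ) else 0)
      = if Nat.Coprime k N then 1 else 0 := by
    rw [← Finset.sum_filter]
    have hset : N.divisors.filter (· ∣ k) = (Nat.gcd N k).divisors := by
      ext d
      simp only [Finset.mem_filter, Nat.mem_divisors, Nat.dvd_gcd_iff]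
      constructor
      · rintro ⟨⟨h1, _⟩, h2⟩
        exact ⟨⟨h1, h2⟩, Nat.gcd_ne_zero_left hN⟩
      · rintro ⟨⟨h1, h2⟩, _⟩
        exact ⟨⟨h1, hN⟩, h2⟩
    rw [hset]
    have := congrArg (fun f => f (Nat.gcd N k)) ArithmeticFunction.moebius_mul_coe_zeta
    simp only [ArithmeticFunction.coe_mul_zeta_apply, ArithmeticFunction.one_apply] at this
    rw [this]
    simp [Nat.Coprime, Nat.gcd_comm k N]
  calc (∑ d ∈ N.divisors, if d ∣ k then ((ArithmeticFunction.moebius d : ℤ):ℂ) else 0)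
      = ((∑ d ∈ N.divisors, if d ∣ k then (ArithmeticFunction.moebius d : ℤ) else 0 : ℤ) : ℂ) := by
        push_cast [apply_ite (fun z : ℤ => (z:ℂ))]
        rfl
    _ = _ := by rw [hZ]; split_ifs <;> simp

lemma count_coprime (N : ℕ) (t : ℕ) :
    ((Finset.range (N * t)).filter (fun k => Nat.Coprime k N)).card = t * N.totient := by
  induction t with
  | zero => simp
  | succ t ih =>
    have hsplit : Finset.range (N * (t+1)) =
        Finset.range (N * t) ∪ Finset.Ico (N * t) (N * t + N) := by
      rw [Finset.range_eq_Ico, show N*(t+1) = N*t+N by ring, Finset.range_eq_Ico,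
        Finset.Ico_union_Ico_eq_Ico (Nat.zero_le _) (Nat.le_add_right _ _)]
    rw [hsplit, Finset.filter_union, Finset.card_union_of_disjoint, ih]
    · have : ((Finset.Ico (N * t) (N * t + N)).filter (fun k => Nat.Coprime k N)).card
          = N.totient := by
        have heq : (Finset.Ico (N * t) (N * t + N)).filter (fun k => Nat.Coprime k N)
            = (Finset.Ico (N * t) (N * t + N)).filter (fun x => N.Coprime x) :=
          Finset.filter_congr (by intro x _; simp [Nat.coprime_comm])
        rw [heq, Nat.filter_coprime_Ico_eq_totient N (N * t)]
      rw [this]; ring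
    · apply Finset.disjoint_filter_filter
      rw [Finset.range_eq_Ico]
      exact Finset.Ico_disjoint_Ico_consecutive 0 (N*t) (N*t+N)

section GroupLemmas
variable {p : ℕ} [Fact p.Prime] {L : Type} [Field L] [Fintype L] [CharP L p]

-- coprimality is stable modulo n when N ∣ n
lemma coprime_mod_iff {N n k : ℕ} (hNn : N ∣ n) :
    Nat.Coprime (k % n) N ↔ Nat.Coprime k N := by
  have h : (k % n) % N = k % N := Nat.mod_mod_of_dvd k hNn
  unfold Nat.Coprime
  rw [Nat.gcd_comm (k % n) N, Nat.gcd_comm k N, Nat.gcd_rec N (k % n), Nat.gcd_rec N k, h]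

lemma nfree_filter_eq_image {G : Type} [Group G] [Fintype G] [DecidableEq G] (α : G)
    {n N : ℕ} (hord : orderOf α = n) (hn : 0 < n) (hNn : N ∣ n) :
    Finset.univ.filter (fun ξ : G => IsNFree α ξ N)
      = ((Finset.range n).filter (fun k => Nat.Coprime k N)).image (α ^ ·) := by
  ext ξ
  simp only [Finset.mem_filter, Finset.mem_univ, true_and, Finset.mem_image, Finset.mem_range]
  constructor
  · rintro ⟨k, hk, rfl⟩
    refine ⟨k % n, ⟨Nat.mod_lt _ hn, (coprime_mod_iff hNn).mpr hk⟩, ?_⟩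
    rw [← hord, pow_mod_orderOf]
  · rintro ⟨k, ⟨-, hk⟩, rfl⟩
    exact ⟨k, hk, rfl⟩

lemma sum_multiples {n d : ℕ} (hd : d ∣ n) (hd0 : 0 < d) (g : ℕ → ℂ) :
    ∑ k ∈ (Finset.range n).filter (d ∣ ·), g k = ∑ i ∈ Finset.range (n / d), g (d * i) := by
  refine Finset.sum_nbij' (fun k => k / d) (fun i => d * i) ?_ ?_ ?_ ?_ ?_
  · intro a ha
    simp only [Finset.mem_filter, Finset.mem_range] at ha ⊢
    exact Nat.div_lt_div_of_lt_of_dvd hd ha.1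
  · intro a ha
    simp only [Finset.mem_filter, Finset.mem_range] at ha ⊢
    constructor
    · calc d * a < d * (n / d) := (Nat.mul_lt_mul_left hd0).mpr ha
        _ = n := Nat.mul_div_cancel' hd
    · exact Dvd.intro a rfl
  · intro a ha
    simp only [Finset.mem_filter, Finset.mem_range] at ha
    exact Nat.mul_div_cancel' ha.2
  · intro a _
    exact Nat.mul_div_cancel_left a hd0
  · intro a ha
    simp only [Finset.mem_filter, Finset.mem_range] at ha
    rw [Nat.mul_div_cancel' ha.2]

lemma gaussPeriod_eq (α : Lˣ) {n : ℕ} (hord : orderOf α = n)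
    (hn : 0 < n) {d : ℕ} (hd : d ∣ n) (hd0 : 0 < d) (j : ℕ) :
    gaussPeriod p L α d (j : ℤ) = ∑ i ∈ Finset.range (n / d), canChar p L ((α : L) ^ (j + d * i)) := by
  have hda : orderOf (α ^ d) = n / d := by
    rw [orderOf_pow' α hd0.ne', hord, Nat.gcd_eq_right hd]
  have hnd : 0 < n / d := Nat.div_pos (Nat.le_of_dvd hn hd) hd0
  have hset : Finset.univ.filter (fun x : Lˣ => ∃ i : ℕ, x = α ^ (j:ℤ) * (α ^ d) ^ i)
      = (Finset.range (n / d)).image (fun i => α ^ j * (α ^ d) ^ i) := by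
    ext x
    simp only [Finset.mem_filter, Finset.mem_univ, true_and, Finset.mem_image, Finset.mem_range]
    constructor
    · rintro ⟨i, rfl⟩
      refine ⟨i % (n / d), Nat.mod_lt _ hnd, ?_⟩
      rw [zpow_natCast, ← hda, pow_mod_orderOf]
    · rintro ⟨i, -, rfl⟩
      exact ⟨i, by rw [zpow_natCast]⟩
  unfold gaussPeriod
  rw [hset, Finset.sum_image ?inj]
  case inj =>
    intro a ha b hb hab
    simp only [Finset.mem_coe, Finset.mem_range, Finset.coe_range, Set.mem_Iio] at ha hb
    have := mul_left_cancel hab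
    exact pow_injOn_Iio_orderOf (by rwa [hda, Set.mem_Iio]) (by rwa [hda, Set.mem_Iio]) this
  refine Finset.sum_congr rfl fun i _ => ?_
  congr 1
  push_cast [pow_add, pow_mul]
  ring

end GroupLemmas

section Core
variable {p : ℕ} [Fact p.Prime] {L : Type} [Field L] [Fintype L] [CharP L p]

lemma sum_nfree_eq_Delta (α : Lˣ) {n N : ℕ} (hord : orderOf α = n) (hn : 0 < n)
    (hNn : N ∣ n) (hN : N ≠ 0) (j : ℕ) :
    ∑ ξ ∈ Finset.univ.filter (fun ξ : Lˣ => IsNFree α ξ N), canChar p L ((α:L)^j * ξ)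
      = DeltaSum p L α N (j : ℤ) := by
  set f : ℕ → ℂ := fun k => canChar p L ((α:L) ^ (j + k)) with hf
  have step1 : ∑ ξ ∈ Finset.univ.filter (fun ξ : Lˣ => IsNFree α ξ N),
      canChar p L ((α:L)^j * ξ)
      = ∑ k ∈ (Finset.range n).filter (fun k => Nat.Coprime k N), f k := by
    rw [nfree_filter_eq_image α hord hn hNn, Finset.sum_image ?inj]
    case inj =>
      intro a ha b hb hab
      simp only [Finset.coe_filter, Set.mem_setOf_eq, Finset.mem_filter, Finset.mem_range] at ha hb
      exact pow_injOn_Iio_orderOf (by rw [hord]; exact ha.1) (by rw [hord]; exact hb.1) hab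
    refine Finset.sum_congr rfl fun k _ => ?_
    simp [hf, pow_add]
  rw [step1]
  calc ∑ k ∈ (Finset.range n).filter (fun k => Nat.Coprime k N), f k
      = ∑ k ∈ Finset.range n, (if Nat.Coprime k N then (1:ℂ) else 0) * f k := by
        rw [Finset.sum_filter]
        exact Finset.sum_congr rfl fun k _ => by split_ifs <;> simp
    _ = ∑ k ∈ Finset.range n,
          (∑ d ∈ N.divisors, if d ∣ k then ((ArithmeticFunction.moebius d : ℤ):ℂ) else 0) * f k := by
        refine Finset.sum_congr rfl fun k _ => ?_
        rw [moebius_indicator hN k]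
    _ = ∑ d ∈ N.divisors, ∑ k ∈ Finset.range n,
          (if d ∣ k then ((ArithmeticFunction.moebius d : ℤ):ℂ) else 0) * f k := by
        simp_rw [Finset.sum_mul]
        exact Finset.sum_comm
    _ = ∑ d ∈ N.divisors, ((ArithmeticFunction.moebius d : ℤ):ℂ)
          * ∑ k ∈ (Finset.range n).filter (d ∣ ·), f k := by
        refine Finset.sum_congr rfl fun d _ => ?_
        rw [Finset.mul_sum, Finset.sum_filter]
        exact Finset.sum_congr rfl fun k _ => by split_ifs <;> simp
    _ = DeltaSum p L α N (j : ℤ) := by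
        unfold DeltaSum
        refine Finset.sum_congr rfl fun d hd => ?_
        have hd0 : 0 < d := Nat.pos_of_mem_divisors hd
        have hdn : d ∣ n := dvd_trans (Nat.dvd_of_mem_divisors hd) hNn
        rw [sum_multiples hdn hd0 f, gaussPeriod_eq α hord hn hdn hd0 j]
end Core

lemma sum_K_split {K : Type} [Field K] [Fintype K] {q : ℕ} (hcard : Fintype.card K = q)
    (β : K) (hβ0 : β ≠ 0) (hordβ : orderOf β = q - 1) (g : K → ℂ) :
    ∑ b : K, g b = g 0 + ∑ i ∈ Finset.range (q - 1), g (β ^ i) := by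
  classical
  have hinj : ∀ a ∈ Finset.range (q-1), ∀ b ∈ Finset.range (q-1), β ^ a = β ^ b → a = b := by
    intro a ha b hb hab
    simp only [Finset.mem_range] at ha hb
    exact pow_injOn_Iio_orderOf (by rw [hordβ]; exact ha) (by rw [hordβ]; exact hb) hab
  have himg : Finset.univ.erase (0:K) = (Finset.range (q-1)).image (β ^ ·) := by
    refine (Finset.eq_of_subset_of_card_le ?_ ?_).symm
    · intro x hx
      simp only [Finset.mem_image, Finset.mem_range] at hx
      obtain ⟨i, -, rfl⟩ := hx
      exact Finset.mem_erase.mpr ⟨pow_ne_zero i hβ0, Finset.mem_univ _⟩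
    · rw [Finset.card_image_of_injOn (fun a ha b hb => hinj a ha b hb),
        Finset.card_erase_of_mem (Finset.mem_univ _), Finset.card_univ, hcard,
        Finset.card_range]
  rw [← Finset.add_sum_erase _ g (Finset.mem_univ (0:K)), himg,
    Finset.sum_image (fun a ha b hb => hinj a ha b hb)]

end MyHelpers

/-- the general formula for `Z_{q,m,N}(c)`. -/
theorem stmt_13 (p s m q Q N : ℕ) [Fact p.Prime] (hs : 0 < s) (hm : 0 < m)
    (hq : q = p ^ s) (hQ : Q = (q ^ m - 1) / (q - 1))
    (K L : Type) [Field K] [Fintype K] [CharP K p] [Field L] [Fintype L] [CharP L p]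
    [Algebra K L]
    (hK : Fintype.card K = q) (hL : Fintype.card L = q ^ m)
    (α : Lˣ) (hα : ∀ x : Lˣ, x ∈ Subgroup.zpowers α)
    (β : K) (hβ : algebraMap K L β = (α : L) ^ Q)
    (hN : N ∣ q ^ m - 1) (c : K) :
    (Zcount K L α N c : ℂ) =
      (1 / (q : ℂ)) * ((((q ^ m - 1) / N : ℕ) : ℂ) * (Nat.totient N : ℂ) +
        fsum p K L α β q Q N c 0) := by

  classical
  have hp : p.Prime := Fact.out
  have hq2 : 2 ≤ q := by
    subst hq
    calc 2 ≤ p := hp.two_le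
      _ ≤ p ^ s := Nat.le_self_pow hs.ne' p
  have hqm2 : 2 ≤ q ^ m := le_trans hq2 (Nat.le_self_pow hm.ne' q)
  set n := q ^ m - 1 with hn
  have hn0 : 0 < n := by omega
  have hN0 : N ≠ 0 := by
    rintro rfl
    exact hn0.ne' (Nat.eq_zero_of_zero_dvd hN)
  -- order of α
  have hcardu : Fintype.card Lˣ = n := by rw [Fintype.card_units, hL]
  have hord : orderOf α = n := by
    rw [orderOf_eq_card_of_forall_mem_zpowers hα, Nat.card_eq_fintype_card, hcardu]
  -- Q and q - 1
  have hq1n : (q - 1) ∣ n := by simpa using Nat.sub_dvd_pow_sub_pow q 1 m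
  have hQmul : Q * (q - 1) = n := by rw [hQ]; exact Nat.div_mul_cancel hq1n
  have hQ0 : Q ≠ 0 := by
    intro h; rw [h, zero_mul] at hQmul; exact hn0.ne' hQmul.symm
  have hQdvd : Q ∣ n := ⟨q - 1, hQmul.symm⟩
  -- order of β
  have hordβ : orderOf β = q - 1 := by
    have h1 : orderOf (algebraMap K L β) = orderOf β :=
      orderOf_injective (algebraMap K L).toMonoidHom (algebraMap K L).injective β
    rw [← h1, hβ]
    have h2 : ((α ^ Q : Lˣ) : L) = (α : L) ^ Q := Units.val_pow_eq_pow_val α Q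
    rw [← h2, orderOf_units, orderOf_pow' α hQ0, hord, Nat.gcd_eq_right hQdvd,
      ← hQmul, Nat.mul_div_cancel_left _ (Nat.pos_of_ne_zero hQ0)]
  have hβ0 : β ≠ 0 := by
    intro h
    rw [h, map_zero] at hβ
    exact (Units.ne_zero (α ^ Q)) (by rw [Units.val_pow_eq_pow_val, ← hβ])
  -- the N-free finset
  set A : Finset Lˣ := Finset.univ.filter (fun ξ : Lˣ => IsNFree α ξ N) with hA
  have hAcard : A.card = (n / N) * N.totient := by
    rw [hA, nfree_filter_eq_image α hord hn0 hN,
      Finset.card_image_of_injOn ?inj]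
    case inj =>
      intro a ha b hb hab
      simp only [Finset.coe_filter, Set.mem_setOf_eq, Finset.mem_range] at ha hb
      exact pow_injOn_Iio_orderOf (by rw [hord]; exact ha.1) (by rw [hord]; exact hb.1) hab
    have hcc := count_coprime N (n / N)
    rw [Nat.mul_div_cancel' hN] at hcc
    rw [hcc]
  -- Zcount as finset card
  have hZ : Zcount K L α N c
      = (A.filter (fun ξ : Lˣ => Algebra.trace K L (ξ:L) = c)).card := by
    rw [Zcount, ← Set.ncard_coe_finset]
    congr 1
    ext ξ
    simp [hA]
  -- the key identity
  have hq0C : (q : ℂ) ≠ 0 := Nat.cast_ne_zero.mpr (by omega)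
  have key : (q : ℂ) * (Zcount K L α N c : ℂ)
      = ((n / N : ℕ) : ℂ) * (N.totient : ℂ) + fsum p K L α β q Q N c 0 := by
    have lhs_eq : (q : ℂ) * (Zcount K L α N c : ℂ)
        = ∑ ξ ∈ A, ∑ b : K, canChar p K (b * (Algebra.trace K L (ξ:L) - c)) := by
      have h2 : ∀ ξ : Lˣ, ∑ b : K, canChar p K (b * (Algebra.trace K L (ξ:L) - c))
          = if Algebra.trace K L (ξ:L) = c then (q:ℂ) else 0 := by
        intro ξ
        rw [sum_canChar_mul p K (Algebra.trace K L (ξ:L) - c), hK]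
        simp [sub_eq_zero]
      simp_rw [h2]
      rw [← Finset.sum_filter, Finset.sum_const, hZ, nsmul_eq_mul, mul_comm]
    rw [lhs_eq]
    have h3 : ∀ (b : K) (ξ : Lˣ), canChar p K (b * (Algebra.trace K L (ξ:L) - c))
        = (starRingEnd ℂ) (canChar p K (b * c)) * canChar p L (algebraMap K L b * (ξ:L)) := by
      intro b ξ
      rw [canChar_conj, mul_sub, sub_eq_add_neg, canChar_add, ← canChar_compat]
      ring
    simp_rw [h3]
    rw [Finset.sum_comm]
    have h4 : ∀ b : K, ∑ ξ ∈ A, (starRingEnd ℂ) (canChar p K (b * c))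
          * canChar p L (algebraMap K L b * (ξ:L))
        = (starRingEnd ℂ) (canChar p K (b * c))
          * ∑ ξ ∈ A, canChar p L (algebraMap K L b * (ξ:L)) := by
      intro b; rw [Finset.mul_sum]
    simp_rw [h4]
    rw [sum_K_split hK β hβ0 hordβ]
    congr 1
    · -- b = 0 term
      simp only [map_zero, zero_mul, canChar_zero, map_one, one_mul]
      rw [Finset.sum_const, hAcard, nsmul_eq_mul, mul_one]
      push_cast
      ring
    · -- the character sum terms
      unfold fsum
      refine Finset.sum_congr rfl fun i _ => ?_
      congr 1
      have h5 : algebraMap K L (β ^ i) = (α : L) ^ (Q * i) := by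
        rw [map_pow, hβ, ← pow_mul]
      rw [h5]
      have h6 := sum_nfree_eq_Delta (p := p) α hord hn0 hN hN0 (Q * i)
      rw [hA, h6, add_zero]
  rw [← key, one_div, inv_mul_cancel_left₀ hq0C]
end

section
/- Let q be a power of a prime, m a positive integer, N a positive divisor of q^m - 1, k an integer, and K_Q the largest divisor of N that is coprime to Q = (q^m - 1)/(q - 1). Then f_k(N, 0, Δ) = (q - 1)·(φ(K_Q)/K_Q)·Δ_k(gcd(Q, N)). -/
open scoped BigOperators
open scoped Classical

section AuxLemmas

open Finset

private lemma lemD (H : ℕ → ℂ) (a b : ℕ) :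
    ∑ t ∈ range (a * b), H t = ∑ u ∈ range a, ∑ j ∈ range b, H (u + a * j) := by
  induction b with
  | zero => simp
  | succ b ih =>
      rw [Nat.mul_succ, Finset.sum_range_add, ih]
      simp only [Finset.sum_range_succ, Finset.sum_add_distrib]
      congr 1
      exact Finset.sum_congr rfl fun u _ => by ring_nf

private lemma lemPer (G : ℕ → ℂ) (a : ℕ) (hper : ∀ t, G (t + a) = G t) (t : ℕ) :
    G t = G (t % a) := by
  conv_lhs => rw [← Nat.mod_add_div t a]
  generalize t / a = s
  induction s with
  | zero => simp
  | succ s ih => rw [Nat.mul_succ, ← add_assoc, hper, ih]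

private lemma lemBij (G : ℕ → ℂ) (a : ℕ) (ha : 0 < a) (hper : ∀ t, G (t + a) = G t)
    (σ : ℕ → ℕ) (hinj : ∀ i < a, ∀ j < a, σ i % a = σ j % a → i = j) :
    ∑ i ∈ range a, G (σ i) = ∑ i ∈ range a, G i := by
  have h1 : ∀ i, G (σ i) = G (σ i % a) := fun i => lemPer G a hper _
  have himg : (range a).image (fun i => σ i % a) = range a := by
    apply Finset.eq_of_subset_of_card_le
    · intro x hx
      simp only [Finset.mem_image, Finset.mem_range] at hx ⊢
      obtain ⟨i, _, rfl⟩ := hx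
      exact Nat.mod_lt _ ha
    · rw [Finset.card_image_of_injOn, card_range]
      intro i hi j hj hij
      exact hinj i (mem_range.mp hi) j (mem_range.mp hj) hij
  calc ∑ i ∈ range a, G (σ i) = ∑ i ∈ range a, G (σ i % a) := by simp_rw [h1]
    _ = ∑ u ∈ (range a).image (fun i => σ i % a), G u := by
        rw [Finset.sum_image]
        intro i hi j hj hij
        exact hinj i (mem_range.mp hi) j (mem_range.mp hj) hij
    _ = ∑ i ∈ range a, G i := by rw [himg]

private lemma lemShift (G : ℕ → ℂ) (a : ℕ) (ha : 0 < a) (hper : ∀ t, G (t + a) = G t)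
    (c : ℕ) : ∑ j ∈ range a, G (c + j) = ∑ j ∈ range a, G j := by
  apply lemBij G a ha hper
  intro i hi j hj hij
  have : (c + i) % a = (c + j) % a := hij
  have h2 : i % a = j % a := Nat.ModEq.add_left_cancel' c this
  rwa [Nat.mod_eq_of_lt hi, Nat.mod_eq_of_lt hj] at h2

private lemma lemMul (G : ℕ → ℂ) (a : ℕ) (ha : 0 < a) (hper : ∀ t, G (t + a) = G t)
    (r : ℕ) (hr : Nat.Coprime r a) :
    ∑ i ∈ range a, G (r * i) = ∑ i ∈ range a, G i := by
  apply lemBij G a ha hper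
  intro i hi j hj hij
  have h2 : i ≡ j [MOD a] :=
    Nat.ModEq.cancel_left_of_coprime (by rwa [Nat.coprime_comm] at hr) hij
  rwa [Nat.ModEq, Nat.mod_eq_of_lt hi, Nat.mod_eq_of_lt hj] at h2

private lemma lemCore (F : ℤ → ℂ) (n : ℕ) (hF : ∀ t : ℤ, F (t + (n : ℤ)) = F t)
    (Q w d : ℕ) (hnQ : n = Q * w) (hw : 0 < w) (hQ0 : 0 < Q) (hd : d ∣ n) (hd0 : 0 < d)
    (haw : d / Nat.gcd Q d ∣ w) (k : ℤ) :
    ∑ i ∈ range w, ∑ j ∈ range (n / d), F ((Q : ℤ) * i + k + (d : ℤ) * j)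
      = ((w / (d / Nat.gcd Q d) : ℕ) : ℂ) *
        ∑ t ∈ range (n / Nat.gcd Q d), F (k + (Nat.gcd Q d : ℤ) * t) := by
  set g := Nat.gcd Q d with hgdef
  have hg0 : 0 < g := Nat.gcd_pos_of_pos_left d hQ0
  have hgQ : g ∣ Q := Nat.gcd_dvd_left Q d
  have hgd : g ∣ d := Nat.gcd_dvd_right Q d
  set a := d / g with hadef
  set e := w / a with hedef
  have ha0 : 0 < a := Nat.div_pos (Nat.le_of_dvd hd0 hgd) hg0
  have hae : a * e = w := Nat.mul_div_cancel' haw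
  have hga : g * a = d := Nat.mul_div_cancel' hgd
  have hn0 : 0 < n := hnQ ▸ Nat.mul_pos hQ0 hw
  have hnd0 : 0 < n / d := Nat.div_pos (Nat.le_of_dvd hn0 hd) hd0
  have hdn : (d : ℤ) * ((n / d : ℕ) : ℤ) = (n : ℤ) := by
    rw [← Nat.cast_mul, Nat.mul_div_cancel' hd]
  have hcop : Nat.Coprime (Q / g) a := Nat.coprime_div_gcd_div_gcd hg0
  have hQa : Q * a = d * (Q / g) := by
    have h1 : Q * a = Q * d / g := (Nat.mul_div_assoc Q hgd).symm
    have h2 : d * (Q / g) = d * Q / g := (Nat.mul_div_assoc d hgQ).symm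
    rw [h1, h2, Nat.mul_comm Q d]
  have hshift : ∀ (c : ℤ) (r : ℕ),
      ∑ j ∈ range (n / d), F (c + (d : ℤ) * (r + j)) = ∑ j ∈ range (n / d), F (c + (d : ℤ) * j) := by
    intro c r
    have hper : ∀ t : ℕ, F (c + (d : ℤ) * ((t + n / d : ℕ) : ℤ)) = F (c + (d : ℤ) * (t : ℤ)) := by
      intro t
      have harg : c + (d : ℤ) * ((t + n / d : ℕ) : ℤ) = (c + (d : ℤ) * t) + n := by
        rw [Nat.cast_add, mul_add, hdn]; ring
      rw [harg, hF]
    have := lemShift (fun t : ℕ => F (c + (d : ℤ) * t)) (n / d) hnd0 hper r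
    simp only [Nat.cast_add] at this
    exact this
  have h1 : ∑ i ∈ range w, ∑ j ∈ range (n / d), F ((Q : ℤ) * i + k + (d : ℤ) * j)
      = ∑ i0 ∈ range a, ∑ i1 ∈ range e, ∑ j ∈ range (n / d),
          F ((Q : ℤ) * (i0 + a * i1 : ℕ) + k + (d : ℤ) * j) := by
    rw [← hae]
    exact lemD (fun i => ∑ j ∈ range (n / d), F ((Q : ℤ) * i + k + (d : ℤ) * j)) a e
  have h2 : ∀ i0 i1 : ℕ, ∑ j ∈ range (n / d), F ((Q : ℤ) * (i0 + a * i1 : ℕ) + k + (d : ℤ) * j)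
      = ∑ j ∈ range (n / d), F ((Q : ℤ) * i0 + k + (d : ℤ) * j) := by
    intro i0 i1
    have harg : ∀ j : ℕ, (Q : ℤ) * ((i0 + a * i1 : ℕ) : ℤ) + k + (d : ℤ) * j
        = ((Q : ℤ) * i0 + k) + (d : ℤ) * (((Q / g) * i1 : ℕ) + (j : ℤ)) := by
      intro j
      have : ((Q : ℤ)) * ((a : ℤ) * i1) = (d : ℤ) * (((Q / g) * i1 : ℕ) : ℤ) := by
        push_cast
        rw [← mul_assoc, ← mul_assoc, ← Nat.cast_mul, hQa]
        push_cast; ring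
      push_cast
      push_cast at this
      nlinarith [this]
    calc ∑ j ∈ range (n / d), F ((Q : ℤ) * (i0 + a * i1 : ℕ) + k + (d : ℤ) * j)
        = ∑ j ∈ range (n / d), F (((Q : ℤ) * i0 + k) + (d : ℤ) * ((((Q / g) * i1 : ℕ) : ℤ) + j)) := by
          refine Finset.sum_congr rfl fun j _ => ?_
          rw [harg j]
      _ = ∑ j ∈ range (n / d), F (((Q : ℤ) * i0 + k) + (d : ℤ) * j) := hshift _ _
      _ = _ := by refine Finset.sum_congr rfl fun j _ => by ring_nf
  have h3 : ∑ i ∈ range w, ∑ j ∈ range (n / d), F ((Q : ℤ) * i + k + (d : ℤ) * j)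
      = (e : ℂ) * ∑ i0 ∈ range a, ∑ j ∈ range (n / d), F ((Q : ℤ) * i0 + k + (d : ℤ) * j) := by
    rw [h1, Finset.mul_sum]
    refine Finset.sum_congr rfl fun i0 _ => ?_
    rw [Finset.sum_congr rfl fun i1 _ => h2 i0 i1, Finset.sum_const, card_range, nsmul_eq_mul]
  set G2 : ℕ → ℂ := fun u => ∑ j ∈ range (n / d), F (k + (g : ℤ) * u + (d : ℤ) * j) with hG2def
  have hG2per : ∀ u : ℕ, G2 (u + a) = G2 u := by
    intro u
    have hga' : (g : ℤ) * ((u + a : ℕ) : ℤ) = (g : ℤ) * u + d := by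
      push_cast [← hga]; ring
    calc G2 (u + a) = ∑ j ∈ range (n / d), F ((k + (g : ℤ) * u) + (d : ℤ) * (((1 : ℕ) : ℤ) + j)) := by
          refine Finset.sum_congr rfl fun j _ => ?_
          rw [hga']; push_cast; ring_nf
      _ = ∑ j ∈ range (n / d), F ((k + (g : ℤ) * u) + (d : ℤ) * j) := hshift _ 1
      _ = G2 u := by refine Finset.sum_congr rfl fun j _ => by ring_nf
  have hH : ∀ i0 : ℕ, ∑ j ∈ range (n / d), F ((Q : ℤ) * i0 + k + (d : ℤ) * j)
      = G2 ((Q / g) * i0) := by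
    intro i0
    refine Finset.sum_congr rfl fun j _ => ?_
    have hq' : (g : ℤ) * ((Q / g : ℕ) : ℤ) = (Q : ℤ) := by
      rw [← Nat.cast_mul, Nat.mul_div_cancel' hgQ]
    have : ((Q : ℤ)) * i0 = (g : ℤ) * (((Q / g) * i0 : ℕ) : ℤ) := by
      rw [Nat.cast_mul, ← mul_assoc, hq']
    rw [this]; ring_nf
  have h4 : ∑ i0 ∈ range a, G2 ((Q / g) * i0) = ∑ u ∈ range a, G2 u :=
    lemMul G2 a ha0 hG2per (Q / g) hcop
  have hag : a * (n / d) = n / g := by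
    have h5 := Nat.div_mul_div_comm hgd hd
    rw [h5, Nat.mul_comm g d, Nat.mul_div_mul_left n g hd0]
  have h6 : ∑ u ∈ range a, G2 u = ∑ t ∈ range (n / g), F (k + (g : ℤ) * t) := by
    rw [← hag, lemD (fun t => F (k + (g : ℤ) * t)) a (n / d)]
    refine Finset.sum_congr rfl fun u _ => Finset.sum_congr rfl fun j _ => ?_
    congr 1
    push_cast [← hga]
    ring
  rw [h3, Finset.sum_congr rfl fun i0 _ => hH i0, h4, h6]

private lemma lemAW (Q w d : ℕ) (hQ0 : 0 < Q) (hw : 0 < w) (hd : d ∣ Q * w)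
    (hsq : Squarefree d) : d / Nat.gcd Q d ∣ w := by
  set g := Nat.gcd Q d with hg
  have hd0 : 0 < d := hsq.ne_zero.bot_lt
  have hgd : g ∣ d := Nat.gcd_dvd_right Q d
  set c := d / g with hc
  have hcd : c ∣ d := Nat.div_dvd_of_dvd hgd
  have hc0 : c ≠ 0 := by
    have : 0 < c := Nat.div_pos (Nat.le_of_dvd hd0 hgd) (Nat.gcd_pos_of_pos_left d hQ0)
    omega
  have hcsq : Squarefree c := hsq.squarefree_of_dvd hcd
  rw [← Nat.factorization_le_iff_dvd hc0 hw.ne']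
  intro ℓ
  by_cases hℓp : ℓ.Prime
  · by_cases hℓc : ℓ ∣ c
    · have h1 : c.factorization ℓ ≤ 1 := hcsq.natFactorization_le_one ℓ
      have hℓd : ℓ ∣ d := hℓc.trans hcd
      have hℓQw : ℓ ∣ Q * w := hℓd.trans hd
      have hℓnQ : ¬ ℓ ∣ Q := by
        intro hℓQ
        have hℓg : ℓ ∣ g := Nat.dvd_gcd hℓQ hℓd
        have : ℓ * ℓ ∣ g * c := mul_dvd_mul hℓg hℓc
        rw [Nat.mul_div_cancel' hgd] at this
        exact hℓp.not_isUnit (hsq ℓ this)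
      have hℓw : ℓ ∣ w := ((Nat.Prime.dvd_mul hℓp).mp hℓQw).resolve_left hℓnQ
      have h2 : 1 ≤ w.factorization ℓ :=
        (Nat.Prime.factorization_pos_of_dvd hℓp hw.ne' hℓw)
      omega
    · simp [Nat.factorization_eq_zero_of_not_dvd hℓc]
  · simp [Nat.factorization_eq_zero_of_not_prime _ hℓp]

private lemma lemMT (KQ : ℕ) (h0 : 0 < KQ) :
    ∑ d ∈ KQ.divisors, ((ArithmeticFunction.moebius d : ℤ) : ℂ) * ((KQ / d : ℕ) : ℂ)
      = (Nat.totient KQ : ℂ) := by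
  have h1 : ∀ n : ℕ, n > 0 → ∑ i ∈ n.divisors, (Nat.totient i : ℂ) = (n : ℂ) := by
    intro n hn
    exact_mod_cast congrArg (Nat.cast : ℕ → ℂ) (Nat.sum_totient n)
  have key := (ArithmeticFunction.sum_eq_iff_sum_smul_moebius_eq
    (R := ℂ) (f := fun x => (Nat.totient x : ℂ)) (g := fun x => (x : ℂ))).mp h1 KQ h0
  rw [← key, Nat.sum_divisorsAntidiagonal
    (f := fun a b => (ArithmeticFunction.moebius a : ℤ) • ((b : ℕ) : ℂ))]
  exact Finset.sum_congr rfl fun d _ => by rw [zsmul_eq_mul]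

private lemma canChar_zero_s14 (p : ℕ) [Fact p.Prime] (F : Type) [Field F] [Fintype F] [CharP F p] :
    canChar p F 0 = 1 := by
  haveI : NeZero p := ⟨(Fact.out : p.Prime).ne_zero⟩
  unfold canChar
  rw [map_zero, ZMod.val_zero]
  simp

private lemma gp_eq (p : ℕ) (L : Type) [Field L] [Fintype L] [CharP L p]
    (α : Lˣ) (n : ℕ) (hn : orderOf α = n) (hn0 : 0 < n)
    (d : ℕ) (hd : d ∣ n) (hd0 : 0 < d) (κ : ℤ) :
    gaussPeriod p L α d κ
      = ∑ j ∈ range (n / d), canChar p L ((α ^ (κ + (d : ℤ) * j) : Lˣ) : L) := by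
  have hord : orderOf (α ^ d) = n / d := by
    rw [orderOf_pow, hn, Nat.gcd_eq_right hd]
  have hnd0 : 0 < n / d := Nat.div_pos (Nat.le_of_dvd hn0 hd) hd0
  have hinj : ∀ i ∈ range (n / d), ∀ j ∈ range (n / d),
      α ^ κ * (α ^ d) ^ i = α ^ κ * (α ^ d) ^ j → i = j := by
    intro i hi j hj hij
    have h2 : (α ^ d) ^ i = (α ^ d) ^ j := mul_left_cancel hij
    have h3 := pow_inj_mod.mp h2
    rw [hord, Nat.mod_eq_of_lt (mem_range.mp hi), Nat.mod_eq_of_lt (mem_range.mp hj)] at h3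
    exact h3
  have himg : Finset.univ.filter (fun x : Lˣ => ∃ i : ℕ, x = α ^ κ * (α ^ d) ^ i)
      = (range (n / d)).image (fun j => α ^ κ * (α ^ d) ^ j) := by
    ext x
    simp only [Finset.mem_filter, Finset.mem_univ, true_and, Finset.mem_image, mem_range]
    constructor
    · rintro ⟨i, rfl⟩
      refine ⟨i % (n / d), ?_, ?_⟩
      · rw [← hord]; exact Nat.mod_lt _ (hord ▸ hnd0)
      · rw [← hord, pow_mod_orderOf]
    · rintro ⟨j, _, rfl⟩; exact ⟨j, rfl⟩
  rw [gaussPeriod, himg, Finset.sum_image hinj]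
  refine Finset.sum_congr rfl fun j _ => ?_
  congr 1
  have : α ^ κ * (α ^ d) ^ j = α ^ (κ + ((d * j : ℕ) : ℤ)) := by
    rw [zpow_add, zpow_natCast, pow_mul]
  rw [this]
  push_cast
  ring_nf

end AuxLemmas

/-- `f_k(N, 0, Δ) = (q-1)(φ(K_Q)/K_Q)Δ_k(gcd(Q,N))`. -/
theorem stmt_14 (p s m q Q N KQ : ℕ) (k : ℤ) [Fact p.Prime] (hs : 0 < s) (hm : 0 < m)
    (hq : q = p ^ s) (hQ : Q = (q ^ m - 1) / (q - 1))
    (K L : Type) [Field K] [Fintype K] [CharP K p] [Field L] [Fintype L] [CharP L p]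
    [Algebra K L]
    (hK : Fintype.card K = q) (hL : Fintype.card L = q ^ m)
    (α : Lˣ) (hα : ∀ x : Lˣ, x ∈ Subgroup.zpowers α)
    (β : K) (hβ : algebraMap K L β = (α : L) ^ Q)
    (hN : N ∣ q ^ m - 1)
    (hKQ1 : KQ ∣ N) (hKQ2 : Nat.Coprime KQ Q)
    (hKQmax : ∀ d : ℕ, d ∣ N → Nat.Coprime d Q → d ≤ KQ) :
    fsum p K L α β q Q N (0 : K) k =
      ((q : ℂ) - 1) * ((Nat.totient KQ : ℂ) / (KQ : ℂ)) *
        DeltaSum p L α (Nat.gcd Q N) k := by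
  classical
  have hp : p.Prime := Fact.out
  have hq2 : 2 ≤ q := by
    rw [hq]
    calc 2 ≤ p := hp.two_le
      _ ≤ p ^ s := Nat.le_self_pow hs.ne' p
  set n := q ^ m - 1 with hndef
  have hqm : q ≤ q ^ m := Nat.le_self_pow hm.ne' q
  have hn0 : 0 < n := by omega
  have hw0 : 0 < q - 1 := by omega
  have hdvd : (q - 1) ∣ n := by
    have := Nat.sub_dvd_pow_sub_pow q 1 m
    simpa using this
  have hnQ : n = Q * (q - 1) := by rw [hQ]; exact (Nat.div_mul_cancel hdvd).symm
  have hQ0 : 0 < Q := by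
    rcases Nat.eq_zero_or_pos Q with h | h
    · rw [h, zero_mul] at hnQ; omega
    · exact h
  have hN0 : 0 < N := Nat.pos_of_ne_zero fun h => by subst h; simp at hN; omega
  have hKQ0 : 0 < KQ := Nat.pos_of_ne_zero fun h => by subst h; simp at hKQ1; omega
  have hNn : N ∣ n := hN
  have hcard : Nat.card Lˣ = n := by
    rw [Nat.card_units, Nat.card_eq_fintype_card, hL]
  have horder : orderOf α = n := by
    rw [orderOf_eq_card_of_forall_mem_zpowers hα]; exact hcard
  set F : ℤ → ℂ := fun t => canChar p L ((α ^ t : Lˣ) : L) with hFdef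
  have hFper : ∀ t : ℤ, F (t + (n : ℤ)) = F t := by
    intro t
    have h : α ^ (t + (n : ℤ)) = α ^ t := by
      rw [zpow_add, zpow_natCast, ← horder, pow_orderOf_eq_one, mul_one]
    simp only [hFdef, h]
  have hgp : ∀ d : ℕ, d ∣ n → 0 < d → ∀ κ : ℤ,
      gaussPeriod p L α d κ = ∑ j ∈ Finset.range (n / d), F (κ + (d : ℤ) * j) :=
    fun d hd hd0 κ => gp_eq p L α n horder hn0 d hd hd0 κ
  set μc : ℕ → ℂ := fun d => ((ArithmeticFunction.moebius d : ℤ) : ℂ) with hμc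
  set T : ℕ → ℂ := fun g => ∑ t ∈ Finset.range (n / g), F (k + (g : ℤ) * t) with hT
  -- Step A : kill the character, swap sums
  have hA : fsum p K L α β q Q N (0 : K) k
      = ∑ d ∈ N.divisors, μc d *
          ∑ i ∈ Finset.range (q - 1), ∑ j ∈ Finset.range (n / d),
            F ((Q : ℤ) * i + k + (d : ℤ) * j) := by
    rw [fsum]
    have hchar : ∀ i : ℕ, (starRingEnd ℂ) (canChar p K (β ^ i * 0)) = 1 := by
      intro i; rw [mul_zero, canChar_zero_s14, map_one]
    calc ∑ i ∈ Finset.range (q - 1),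
          (starRingEnd ℂ) (canChar p K (β ^ i * 0)) * DeltaSum p L α N ((Q * i : ℕ) + k)
        = ∑ i ∈ Finset.range (q - 1), DeltaSum p L α N ((Q * i : ℕ) + k) := by
          exact Finset.sum_congr rfl fun i _ => by rw [hchar i, one_mul]
      _ = ∑ i ∈ Finset.range (q - 1), ∑ d ∈ N.divisors,
            μc d * gaussPeriod p L α d ((Q * i : ℕ) + k) := rfl
      _ = ∑ d ∈ N.divisors, ∑ i ∈ Finset.range (q - 1),
            μc d * gaussPeriod p L α d ((Q * i : ℕ) + k) := Finset.sum_comm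
      _ = _ := by
          refine Finset.sum_congr rfl fun d hd => ?_
          obtain ⟨hdN, hNne⟩ := Nat.mem_divisors.mp hd
          have hd0 : 0 < d := Nat.pos_of_ne_zero fun h => by subst h; simp at hdN; omega
          rw [← Finset.mul_sum]
          congr 1
          refine Finset.sum_congr rfl fun i _ => ?_
          rw [hgp d (hdN.trans hNn) hd0 ((Q * i : ℕ) + k)]
          refine Finset.sum_congr rfl fun j _ => ?_
          congr 1 <;> (try (push_cast; ring))
  -- Step B : apply the core identity for squarefree d
  have hB : ∀ d ∈ N.divisors,
      μc d * ∑ i ∈ Finset.range (q - 1), ∑ j ∈ Finset.range (n / d),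
          F ((Q : ℤ) * i + k + (d : ℤ) * j)
      = μc d * (((q - 1) / (d / Nat.gcd Q d) : ℕ) : ℂ) * T (Nat.gcd Q d) := by
    intro d hd
    obtain ⟨hdN, _⟩ := Nat.mem_divisors.mp hd
    by_cases hsq : Squarefree d
    · have hd0 : 0 < d := hsq.ne_zero.bot_lt
      have hdn : d ∣ n := hdN.trans hNn
      have haw : d / Nat.gcd Q d ∣ q - 1 := lemAW Q (q - 1) d hQ0 hw0 (hnQ ▸ hdn) hsq
      rw [lemCore F n hFper Q (q - 1) d hnQ hw0 hQ0 hdn hd0 haw k]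
      simp only [hT]
      ring
    · simp only [hμc, ArithmeticFunction.moebius_eq_zero_of_not_squarefree hsq]
      simp
  -- Step C : the divisor-pair bijection
  have hgcd0 : 0 < Nat.gcd Q N := Nat.gcd_pos_of_pos_left N hQ0
  have hX : ∑ d ∈ N.divisors, μc d * (((q - 1) / (d / Nat.gcd Q d) : ℕ) : ℂ) * T (Nat.gcd Q d)
      = (∑ d1 ∈ (Nat.gcd Q N).divisors, μc d1 * T d1)
        * (∑ d2 ∈ KQ.divisors, μc d2 * (((q - 1) / d2 : ℕ) : ℂ)) := by
    have hstep1 : ∑ d ∈ N.divisors,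
          μc d * (((q - 1) / (d / Nat.gcd Q d) : ℕ) : ℂ) * T (Nat.gcd Q d)
        = ∑ d ∈ N.divisors.filter Squarefree,
          μc d * (((q - 1) / (d / Nat.gcd Q d) : ℕ) : ℂ) * T (Nat.gcd Q d) := by
      symm
      apply Finset.sum_filter_of_ne
      intro d _ hne
      by_contra hsq
      apply hne
      simp only [hμc, ArithmeticFunction.moebius_eq_zero_of_not_squarefree hsq]
      simp
    have hstep3 : ∑ pr ∈ ((Nat.gcd Q N).divisors ×ˢ KQ.divisors).filter
            (fun pr => Squarefree pr.1 ∧ Squarefree pr.2),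
          μc pr.1 * μc pr.2 * (((q - 1) / pr.2 : ℕ) : ℂ) * T pr.1
        = ∑ pr ∈ (Nat.gcd Q N).divisors ×ˢ KQ.divisors,
          μc pr.1 * μc pr.2 * (((q - 1) / pr.2 : ℕ) : ℂ) * T pr.1 := by
      apply Finset.sum_subset (Finset.filter_subset _ _)
      intro pr hpr hnot
      have h1 : ¬(Squarefree pr.1 ∧ Squarefree pr.2) := fun hc =>
        hnot (Finset.mem_filter.mpr ⟨hpr, hc⟩)
      rcases not_and_or.mp h1 with h | h
      · simp [hμc, ArithmeticFunction.moebius_eq_zero_of_not_squarefree h]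
      · simp [hμc, ArithmeticFunction.moebius_eq_zero_of_not_squarefree h]
    have hstep2 : ∑ d ∈ N.divisors.filter Squarefree,
          μc d * (((q - 1) / (d / Nat.gcd Q d) : ℕ) : ℂ) * T (Nat.gcd Q d)
        = ∑ pr ∈ ((Nat.gcd Q N).divisors ×ˢ KQ.divisors).filter
            (fun pr => Squarefree pr.1 ∧ Squarefree pr.2),
          μc pr.1 * μc pr.2 * (((q - 1) / pr.2 : ℕ) : ℂ) * T pr.1 := by
      refine Finset.sum_nbij' (fun d => (Nat.gcd Q d, d / Nat.gcd Q d))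
        (fun pr => pr.1 * pr.2) ?_ ?_ ?_ ?_ ?_
      · intro d hd
        rw [Finset.mem_filter] at hd
        obtain ⟨hdmem, hsq⟩ := hd
        obtain ⟨hdN, _⟩ := Nat.mem_divisors.mp hdmem
        have hgd : Nat.gcd Q d ∣ d := Nat.gcd_dvd_right Q d
        have hcd : d / Nat.gcd Q d ∣ d := Nat.div_dvd_of_dvd hgd
        have hmul : Nat.gcd Q d * (d / Nat.gcd Q d) = d := Nat.mul_div_cancel' hgd
        have hsq2 : Squarefree (Nat.gcd Q d * (d / Nat.gcd Q d)) := by rw [hmul]; exact hsq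
        obtain ⟨hcop, hsg, hsc⟩ := Nat.squarefree_mul_iff.mp hsq2
        have hcQ : Nat.Coprime (d / Nat.gcd Q d) Q := by
          have h0 := Nat.coprime_div_gcd_of_squarefree hsq hQ0.ne'
          rwa [Nat.gcd_comm d Q] at h0
        have hcKQ : d / Nat.gcd Q d ∣ KQ := by
          have h1 : Nat.lcm (d / Nat.gcd Q d) KQ ∣ N := Nat.lcm_dvd (hcd.trans hdN) hKQ1
          have h2 : Nat.Coprime (Nat.lcm (d / Nat.gcd Q d) KQ) Q :=
            Nat.Coprime.coprime_dvd_left (Nat.lcm_dvd_mul _ _) (Nat.Coprime.mul hcQ hKQ2)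
          have h3 : Nat.lcm (d / Nat.gcd Q d) KQ ≤ KQ := hKQmax _ h1 h2
          have hc0 : d / Nat.gcd Q d ≠ 0 := by
            have : 0 < d := hsq.ne_zero.bot_lt
            have : 0 < d / Nat.gcd Q d :=
              Nat.div_pos (Nat.le_of_dvd this hgd) (Nat.gcd_pos_of_pos_left d hQ0)
            omega
          have h4 : 0 < Nat.lcm (d / Nat.gcd Q d) KQ :=
            Nat.pos_of_ne_zero (Nat.lcm_ne_zero hc0 hKQ0.ne')
          have h5 : Nat.lcm (d / Nat.gcd Q d) KQ = KQ :=
            le_antisymm h3 (Nat.le_of_dvd h4 (Nat.dvd_lcm_right _ _))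
          exact h5 ▸ Nat.dvd_lcm_left _ _
        refine Finset.mem_filter.mpr ⟨Finset.mem_product.mpr ⟨?_, ?_⟩, hsg, hsc⟩
        · exact Nat.mem_divisors.mpr
            ⟨Nat.dvd_gcd (Nat.gcd_dvd_left Q d) (hgd.trans hdN), hgcd0.ne'⟩
        · exact Nat.mem_divisors.mpr ⟨hcKQ, hKQ0.ne'⟩
      · intro pr hpr
        rw [Finset.mem_filter, Finset.mem_product] at hpr
        obtain ⟨⟨h1, h2⟩, hs1, hs2⟩ := hpr
        obtain ⟨hd1, _⟩ := Nat.mem_divisors.mp h1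
        obtain ⟨hd2, _⟩ := Nat.mem_divisors.mp h2
        have hd1Q : pr.1 ∣ Q := hd1.trans (Nat.gcd_dvd_left Q N)
        have hd1N : pr.1 ∣ N := hd1.trans (Nat.gcd_dvd_right Q N)
        have h2Q : Nat.Coprime pr.2 Q := Nat.Coprime.coprime_dvd_left hd2 hKQ2
        have hcop : Nat.Coprime pr.1 pr.2 :=
          (Nat.Coprime.coprime_dvd_right hd1Q h2Q).symm
        refine Finset.mem_filter.mpr ⟨Nat.mem_divisors.mpr
          ⟨Nat.Coprime.mul_dvd_of_dvd_of_dvd hcop hd1N (hd2.trans hKQ1), hN0.ne'⟩, ?_⟩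
        exact Nat.squarefree_mul_iff.mpr ⟨hcop, hs1, hs2⟩
      · intro d _
        exact Nat.mul_div_cancel' (Nat.gcd_dvd_right Q d)
      · intro pr hpr
        rw [Finset.mem_filter, Finset.mem_product] at hpr
        obtain ⟨⟨h1, h2⟩, hs1, hs2⟩ := hpr
        obtain ⟨hd1, _⟩ := Nat.mem_divisors.mp h1
        obtain ⟨hd2, _⟩ := Nat.mem_divisors.mp h2
        have hd1Q : pr.1 ∣ Q := hd1.trans (Nat.gcd_dvd_left Q N)
        have h2Q : Nat.Coprime pr.2 Q := Nat.Coprime.coprime_dvd_left hd2 hKQ2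
        have hpr10 : 0 < pr.1 := Nat.pos_of_mem_divisors h1
        have hg : Nat.gcd Q (pr.1 * pr.2) = pr.1 := by
          apply Nat.dvd_antisymm
          · have hGQ : Nat.gcd Q (pr.1 * pr.2) ∣ Q := Nat.gcd_dvd_left _ _
            have hG2 : Nat.Coprime (Nat.gcd Q (pr.1 * pr.2)) pr.2 :=
              (Nat.Coprime.coprime_dvd_right hGQ h2Q).symm
            exact Nat.Coprime.dvd_of_dvd_mul_right hG2 (Nat.gcd_dvd_right _ _)
          · exact Nat.dvd_gcd hd1Q (Nat.dvd_mul_right _ _)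
        have : (Nat.gcd Q (pr.1 * pr.2), pr.1 * pr.2 / Nat.gcd Q (pr.1 * pr.2))
            = (pr.1, pr.2) := by
          rw [hg, Nat.mul_div_cancel_left _ hpr10]
        exact this.trans Prod.mk.eta
      · intro d hd
        rw [Finset.mem_filter] at hd
        obtain ⟨_, hsq⟩ := hd
        have hgd : Nat.gcd Q d ∣ d := Nat.gcd_dvd_right Q d
        have hmul : Nat.gcd Q d * (d / Nat.gcd Q d) = d := Nat.mul_div_cancel' hgd
        have hsq2 : Squarefree (Nat.gcd Q d * (d / Nat.gcd Q d)) := by rw [hmul]; exact hsq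
        obtain ⟨hcop, _, _⟩ := Nat.squarefree_mul_iff.mp hsq2
        have hμ' : ArithmeticFunction.moebius d
            = ArithmeticFunction.moebius (Nat.gcd Q d)
              * ArithmeticFunction.moebius (d / Nat.gcd Q d) := by
          conv_lhs => rw [← hmul]
          exact ArithmeticFunction.isMultiplicative_moebius.map_mul_of_coprime hcop
        have hμ : μc d = μc (Nat.gcd Q d) * μc (d / Nat.gcd Q d) := by
          simp only [hμc]
          rw [hμ']
          push_cast
          ring
        rw [hμ]
    rw [hstep1, hstep2, hstep3, Finset.sum_product, Finset.sum_mul]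
    refine Finset.sum_congr rfl fun d1 _ => ?_
    rw [Finset.mul_sum]
    exact Finset.sum_congr rfl fun d2 _ => by ring
  -- Step D: evaluate the two factors
  have hDelta : ∑ d1 ∈ (Nat.gcd Q N).divisors, μc d1 * T d1
      = DeltaSum p L α (Nat.gcd Q N) k := by
    rw [DeltaSum]
    refine Finset.sum_congr rfl fun d1 hd1 => ?_
    obtain ⟨hdvd1, _⟩ := Nat.mem_divisors.mp hd1
    have hd10 : 0 < d1 := Nat.pos_of_mem_divisors hd1
    have hd1n : d1 ∣ n := hdvd1.trans ((Nat.gcd_dvd_right Q N).trans hNn)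
    rw [hgp d1 hd1n hd10 k]
  have hKQw : KQ ∣ q - 1 := by
    have h1 : KQ ∣ Q * (q - 1) := hnQ ▸ (hKQ1.trans hNn)
    exact Nat.Coprime.dvd_of_dvd_mul_left hKQ2 h1
  have hS2 : ∑ d2 ∈ KQ.divisors, μc d2 * (((q - 1) / d2 : ℕ) : ℂ)
      = ((q : ℂ) - 1) * ((Nat.totient KQ : ℂ) / (KQ : ℂ)) := by
    have hsplit : ∀ d2 ∈ KQ.divisors, ((q - 1) / d2 : ℕ) = ((q - 1) / KQ) * (KQ / d2) := by
      intro d2 hd2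
      obtain ⟨hdv, _⟩ := Nat.mem_divisors.mp hd2
      rw [Nat.div_mul_div_comm hKQw hdv, Nat.mul_comm (q - 1) KQ,
        Nat.mul_div_mul_left _ _ hKQ0]
    calc ∑ d2 ∈ KQ.divisors, μc d2 * (((q - 1) / d2 : ℕ) : ℂ)
        = ∑ d2 ∈ KQ.divisors, (((q - 1) / KQ : ℕ) : ℂ) * (μc d2 * ((KQ / d2 : ℕ) : ℂ)) := by
          refine Finset.sum_congr rfl fun d2 hd2 => ?_
          rw [hsplit d2 hd2]
          push_cast
          ring
      _ = (((q - 1) / KQ : ℕ) : ℂ) * (Nat.totient KQ : ℂ) := by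
          rw [← Finset.mul_sum, lemMT KQ hKQ0]
      _ = ((q : ℂ) - 1) * ((Nat.totient KQ : ℂ) / (KQ : ℂ)) := by
          have hKQne : (KQ : ℂ) ≠ 0 := by exact_mod_cast hKQ0.ne'
          have h1 : (((q - 1) / KQ : ℕ) : ℂ) = ((q - 1 : ℕ) : ℂ) / (KQ : ℂ) :=
            Nat.cast_div hKQw hKQne
          have h2 : ((q - 1 : ℕ) : ℂ) = (q : ℂ) - 1 := by
            push_cast [Nat.cast_sub (by omega : 1 ≤ q)]
            ring
          rw [h1, h2]
          field_simp
  rw [hA, Finset.sum_congr rfl hB, hX, hDelta, hS2]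
  ring
end

section
/- Let q be a power of a prime, m a positive integer, Q = (q^m - 1)/(q - 1), and let D be the smallest positive divisor of q - 1 such that (q - 1)/D is coprime to Q. Then the number of primitive elements ξ ∈ F_{q^m} with Tr_{F_{q^m}/F_q}(ξ) = 0 satisfies Z_{q,m,q^m-1}(0) = D·φ((q-1)/D)·( φ(Q) + Δ_0(Q) )/q = D·φ((q-1)/D)·Z_{q,m,Q}(0)/(q - 1). -/
open scoped BigOperators
open scoped Classical

section Helpers

open Finset

private lemma hsum_pow {G : Type*} [Group G] [Fintype G] (a : G)
    (ha : ∀ x : G, x ∈ Subgroup.zpowers a) {β : Type*} [AddCommMonoid β] (f : G → β) :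
    ∑ j ∈ range (orderOf a), f (a ^ j) = ∑ x : G, f x := by
  refine Finset.sum_bij (fun j _ => a ^ j) (fun _ _ => mem_univ _) ?_ ?_ (fun _ _ => rfl)
  · intro j hj j' hj' h
    exact pow_injOn_Iio_orderOf (Set.mem_Iio.mpr (mem_range.mp hj))
      (Set.mem_Iio.mpr (mem_range.mp hj')) h
  · intro x _
    obtain ⟨k, hk⟩ := (Submonoid.mem_powers_iff _ _).mp ((mem_powers_iff_mem_zpowers).mpr (ha x))
    exact ⟨k % orderOf a, mem_range.mpr (Nat.mod_lt _ (orderOf_pos a)), by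
      show a ^ (k % orderOf a) = x
      rw [pow_mod_orderOf, hk]⟩

private lemma hcard_pow {G : Type*} [Group G] [Fintype G] (a : G)
    (ha : ∀ x : G, x ∈ Subgroup.zpowers a) (P : G → Prop) [DecidablePred P] :
    ((range (orderOf a)).filter (fun k => P (a ^ k))).card = (univ.filter P).card := by
  rw [Finset.card_filter, Finset.card_filter]
  exact hsum_pow a ha (fun x => if P x then 1 else 0)

private lemma hsum_range_mul {β : Type*} [AddCommMonoid β] (Q R : ℕ) (f : ℕ → β) :
    ∑ k ∈ range (Q * R), f k = ∑ j ∈ range R, ∑ r ∈ range Q, f (r + Q * j) := by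
  induction R with
  | zero => simp
  | succ R ih =>
    rw [Nat.mul_succ, Finset.sum_range_add, ih, Finset.sum_range_succ]
    congr 1
    exact Finset.sum_congr rfl fun r _ => by rw [add_comm]

private lemma hfilter_isUnit_card (M : ℕ) [NeZero M] :
    ((univ : Finset (ZMod M)).filter IsUnit).card = M.totient := by
  rw [← ZMod.card_units_eq_totient M, ← Finset.card_univ]
  symm
  refine Finset.card_bij (fun (u : (ZMod M)ˣ) _ => (u : ZMod M)) ?_ ?_ ?_
  · intro u _; exact mem_filter.mpr ⟨mem_univ _, ⟨u, rfl⟩⟩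
  · intro u _ v _ h; exact Units.ext h
  · intro b hb
    obtain ⟨u, hu⟩ := (mem_filter.mp hb).2
    exact ⟨u, mem_univ _, hu⟩

private lemma hcount_affine (M Qc r : ℕ) (hM : 0 < M) (h : Nat.Coprime Qc M) :
    ((range M).filter (fun a => Nat.Coprime (r + Qc * a) M)).card = M.totient := by
  haveI : NeZero M := ⟨hM.ne'⟩
  have e1 : ((range M).filter (fun a => Nat.Coprime (r + Qc * a) M)).card
      = ((univ : Finset (ZMod M)).filter
          (fun a : ZMod M => IsUnit ((r : ZMod M) + (Qc : ZMod M) * a))).card := by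
    refine Finset.card_bij (fun a _ => ((a : ℕ) : ZMod M)) ?_ ?_ ?_
    · intro a ha
      refine mem_filter.mpr ⟨mem_univ _, ?_⟩
      have h2 := (mem_filter.mp ha).2
      have h3 : IsUnit (((r + Qc * a : ℕ)) : ZMod M) := (ZMod.isUnit_iff_coprime _ _).mpr h2
      push_cast at h3
      exact h3
    · intro a ha b hb hab
      have ha' := mem_range.mp (mem_filter.mp ha).1
      have hb' := mem_range.mp (mem_filter.mp hb).1
      have := congrArg ZMod.val hab
      rwa [ZMod.val_cast_of_lt ha', ZMod.val_cast_of_lt hb'] at this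
    · intro b hb
      refine ⟨b.val, ?_, by simp [ZMod.natCast_val, ZMod.cast_id]⟩
      refine mem_filter.mpr ⟨mem_range.mpr b.val_lt, ?_⟩
      have h2 := (mem_filter.mp hb).2
      rw [← ZMod.isUnit_iff_coprime]
      push_cast
      simpa [ZMod.natCast_val, ZMod.cast_id] using h2
  rw [e1, ← hfilter_isUnit_card M]
  set u : (ZMod M)ˣ := ZMod.unitOfCoprime Qc h with hu
  have hQu : (Qc : ZMod M) = (u : ZMod M) := (ZMod.coe_unitOfCoprime Qc h).symm
  have hci : (Qc : ZMod M) * ((u⁻¹ : (ZMod M)ˣ) : ZMod M) = 1 := by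
    rw [hQu]; exact Units.mul_inv u
  have hic : ((u⁻¹ : (ZMod M)ˣ) : ZMod M) * (Qc : ZMod M) = 1 := by
    rw [hQu]; exact Units.inv_mul u
  have hval : ∀ b : ZMod M,
      (r : ZMod M) + (Qc : ZMod M) * (((u⁻¹ : (ZMod M)ˣ) : ZMod M) * (b - (r : ZMod M))) = b := by
    intro b; rw [← mul_assoc, hci, one_mul]; ring
  refine Finset.card_bij' (fun a _ => (r : ZMod M) + (Qc : ZMod M) * a)
    (fun b _ => ((u⁻¹ : (ZMod M)ˣ) : ZMod M) * (b - (r : ZMod M))) ?_ ?_ ?_ ?_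
  · intro a ha; exact mem_filter.mpr ⟨mem_univ _, (mem_filter.mp ha).2⟩
  · intro b hb
    refine mem_filter.mpr ⟨mem_univ _, ?_⟩
    have h2 := (mem_filter.mp hb).2
    rw [hval b]
    exact h2
  · intro a _
    show ((u⁻¹ : (ZMod M)ˣ) : ZMod M) * (((r : ZMod M) + (Qc : ZMod M) * a) - (r : ZMod M)) = a
    rw [add_sub_cancel_left, ← mul_assoc, hic, one_mul]
  · intro b _
    exact hval b

private lemma hsum_K_split {K : Type*} [Field K] [Fintype K] {β : Type*} [AddCommMonoid β]
    (g : K → β) :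
    ∑ x : K, g x = g 0 + ∑ u : Kˣ, g ↑u := by
  rw [← Finset.add_sum_erase _ _ (Finset.mem_univ (0 : K))]
  congr 1
  symm
  refine Finset.sum_bij (fun (u : Kˣ) _ => (u : K)) ?_ ?_ ?_ (fun _ _ => rfl)
  · intro u _; exact Finset.mem_erase.mpr ⟨u.ne_zero, mem_univ _⟩
  · intro u _ v _ h; exact Units.ext h
  · intro x hx
    exact ⟨Units.mk0 x (Finset.mem_erase.mp hx).1, mem_univ _, rfl⟩

private lemma hisNFree_iff {G : Type} [Group G] [Fintype G] (a : G) (N k : ℕ)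
    (hN : N ∣ orderOf a) :
    IsNFree a (a ^ k) N ↔ Nat.Coprime k N := by
  constructor
  · rintro ⟨j, hj, hjk⟩
    have hmod : k ≡ j [MOD orderOf a] := pow_eq_pow_iff_modEq.mp hjk
    have hmodN : k % N = j % N := hmod.of_dvd hN
    have hg : Nat.gcd N k = Nat.gcd N j := by
      rw [Nat.gcd_rec N k, Nat.gcd_rec N j, hmodN]
    rw [Nat.Coprime, Nat.gcd_comm, hg, Nat.gcd_comm]
    exact hj
  · intro h; exact ⟨k, h, rfl⟩

private lemma hmoebius_sum (g : ℕ) :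
    (∑ d ∈ g.divisors, (ArithmeticFunction.moebius d : ℤ)) = if g = 1 then 1 else 0 := by
  have h1 : ((ArithmeticFunction.moebius * ↑ArithmeticFunction.zeta : ArithmeticFunction ℤ)) g
      = ∑ d ∈ g.divisors, (ArithmeticFunction.moebius d : ℤ) :=
    ArithmeticFunction.coe_mul_zeta_apply
  rw [ArithmeticFunction.moebius_mul_coe_zeta] at h1
  rw [← h1, ArithmeticFunction.one_apply]

private lemma hmem_range_algebraMap {K L : Type} [Field K] [Fintype K] [Field L] [Fintype L]
    [Algebra K L] {q : ℕ} (hK : Fintype.card K = q) (hq2 : 2 ≤ q) (y : L) (hy : y ^ q = y) :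
    ∃ b : K, algebraMap K L b = y := by
  classical
  set f : Polynomial L := Polynomial.X ^ q - Polynomial.X with hf
  have hcoeff : f.coeff q = 1 := by
    rw [hf, Polynomial.coeff_sub, Polynomial.coeff_X_pow, Polynomial.coeff_X,
      if_pos rfl, if_neg (by omega : ¬ (1 = q))]
    ring
  have hfne : f ≠ 0 := fun h => by simp [h] at hcoeff
  have hdeg : f.natDegree ≤ q := by
    refine le_trans (Polynomial.natDegree_sub_le _ _) ?_
    simp [Polynomial.natDegree_X_pow, Polynomial.natDegree_X]
    omega
  have hroot : ∀ z : L, z ^ q = z → z ∈ f.roots.toFinset := by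
    intro z hz
    rw [Multiset.mem_toFinset, Polynomial.mem_roots hfne]
    simp [Polynomial.IsRoot, hf, sub_eq_zero, hz]
  set S : Finset L := Finset.univ.image (algebraMap K L) with hS
  have hcardS : S.card = q := by
    rw [hS, Finset.card_image_of_injective _ (algebraMap K L).injective, Finset.card_univ, hK]
  have hSsub : S ⊆ f.roots.toFinset := by
    intro z hz
    obtain ⟨b, _, rfl⟩ := Finset.mem_image.mp hz
    refine hroot _ ?_
    rw [← map_pow, ← hK, FiniteField.pow_card]
  have hroots : f.roots.toFinset.card ≤ q :=
    le_trans (Multiset.toFinset_card_le _) (le_trans (Polynomial.card_roots' f) hdeg)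
  have hEq : S = f.roots.toFinset :=
    Finset.eq_of_subset_of_card_le hSsub (by omega)
  have hy' : y ∈ S := hEq ▸ hroot y hy
  obtain ⟨b, _, hb⟩ := Finset.mem_image.mp hy'
  exact ⟨b, hb⟩

end Helpers

set_option maxHeartbeats 2000000 in
/-- the number of primitive elements with trace zero. -/
theorem stmt_15 (p s m q Q D : ℕ) [Fact p.Prime] (hs : 0 < s) (hm : 0 < m)
    (hq : q = p ^ s) (hQ : Q = (q ^ m - 1) / (q - 1))
    (K L : Type) [Field K] [Fintype K] [Field L] [Fintype L] [Algebra K L] [CharP L p]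
    (hK : Fintype.card K = q) (hL : Fintype.card L = q ^ m)
    (α : Lˣ) (hα : ∀ x : Lˣ, x ∈ Subgroup.zpowers α)
    (hD0 : 0 < D) (hD1 : D ∣ q - 1) (hD2 : Nat.Coprime ((q - 1) / D) Q)
    (hDmin : ∀ D' : ℕ, 0 < D' → D' ∣ q - 1 → Nat.Coprime ((q - 1) / D') Q → D ≤ D') :
    (Zcount K L α (q ^ m - 1) (0 : K) : ℂ) =
      (D : ℂ) * (Nat.totient ((q - 1) / D) : ℂ) *
        ((Nat.totient Q : ℂ) + DeltaSum p L α Q 0) / (q : ℂ) ∧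
    (Zcount K L α (q ^ m - 1) (0 : K) : ℂ) =
      (D : ℂ) * (Nat.totient ((q - 1) / D) : ℂ) *
        (Zcount K L α Q (0 : K) : ℂ) / ((q : ℂ) - 1) := by
  classical
  -- basic numerics
  have hp2 : 2 ≤ p := (Fact.out : p.Prime).two_le
  have hq2 : 2 ≤ q := by
    rw [hq]
    exact le_trans hp2 (Nat.le_self_pow hs.ne' p)
  have hdvd : (q - 1) ∣ (q ^ m - 1) := by
    simpa using Nat.sub_dvd_pow_sub_pow q 1 m
  have hn1 : 1 < q ^ m := Nat.one_lt_pow hm.ne' (by omega)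
  have hnpos : 0 < q ^ m - 1 := by omega
  have hqm : q ≤ q ^ m := Nat.le_self_pow hm.ne' q
  have hQpos : 0 < Q := by
    rw [hQ]
    exact Nat.div_pos (by omega) (by omega)
  have hQn : Q * (q - 1) = q ^ m - 1 := by
    rw [hQ]; exact Nat.div_mul_cancel hdvd
  have hQdvd : Q ∣ q ^ m - 1 := ⟨q - 1, hQn.symm⟩
  have hMpos : 0 < (q - 1) / D := Nat.div_pos (Nat.le_of_dvd (by omega) hD1) hD0
  have hDM : D * ((q - 1) / D) = q - 1 := Nat.mul_div_cancel' hD1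
  have hcardL : Fintype.card Lˣ = q ^ m - 1 := by rw [Fintype.card_units, hL]
  have hord : orderOf α = q ^ m - 1 := by
    rw [orderOf_eq_card_of_forall_mem_zpowers hα, Nat.card_eq_fintype_card, hcardL]
  -- instances
  haveI : CharP K p := by
    have h1 : CharP L (ringChar K) :=
      charP_of_injective_algebraMap (algebraMap K L).injective (ringChar K)
    have h2 : ringChar K = p := CharP.eq L h1 ‹CharP L p›
    exact h2 ▸ ringChar.charP K
  haveI : NeZero p := ⟨(Fact.out : p.Prime).ne_zero⟩
  letI : Algebra (ZMod p) K := ZMod.algebra K p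
  letI : Algebra (ZMod p) L := ZMod.algebra L p
  haveI : IsScalarTower (ZMod p) K L := IsScalarTower.of_algebraMap_eq' (RingHom.ext_zmod _ _)
  haveI : Module.Finite (ZMod p) K := Module.Finite.of_finite
  haveI : Module.Finite (ZMod p) L := Module.Finite.of_finite
  haveI : Module.Finite K L := Module.Finite.of_finite
  haveI : Algebra.IsAlgebraic (ZMod p) K := Algebra.IsAlgebraic.of_finite _ _
  haveI : Algebra.IsSeparable (ZMod p) K := inferInstance
  -- the subfield element b with algebraMap b = α ^ Q
  have hαunit : ((α ^ Q : Lˣ) : L) ^ q = ((α ^ Q : Lˣ) : L) := by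
    have h1 : (α ^ Q) ^ (q - 1) = 1 := by
      rw [← pow_mul, hQn, ← hord]
      exact pow_orderOf_eq_one α
    have h2 : (α ^ Q) ^ q = α ^ Q := by
      have hq' : q = (q - 1) + 1 := by omega
      rw [hq', pow_succ, h1, one_mul]
    rw [← Units.val_pow_eq_pow_val, h2]
  obtain ⟨b, hb⟩ := hmem_range_algebraMap hK hq2 _ hαunit
  have hb0 : b ≠ 0 := by
    intro h
    rw [h, map_zero] at hb
    exact (Units.ne_zero _) hb.symm
  have hpowQ : ∀ j : ℕ, ((α ^ (Q * j) : Lˣ) : L) = algebraMap K L (b ^ j) := by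
    intro j
    rw [pow_mul, Units.val_pow_eq_pow_val, map_pow, hb]
  -- trace periodicity
  have hTr_per : ∀ r j : ℕ,
      (Algebra.trace K L ((α ^ (r + Q * j) : Lˣ) : L) = 0)
        ↔ (Algebra.trace K L ((α ^ r : Lˣ) : L) = 0) := by
    intro r j
    have e1 : ((α ^ (r + Q * j) : Lˣ) : L)
        = algebraMap K L (b ^ j) * ((α ^ r : Lˣ) : L) := by
      rw [pow_add, Units.val_mul, hpowQ j, mul_comm]
    rw [e1, ← Algebra.smul_def, map_smul, smul_eq_mul, mul_eq_zero]
    exact or_iff_right (pow_ne_zero j hb0)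
  -- counting: Zcount as a filtered count of exponents
  have hZ : ∀ N : ℕ, N ∣ q ^ m - 1 → Zcount K L α N 0
      = ((Finset.range (q ^ m - 1)).filter
          (fun k => Nat.Coprime k N ∧ Algebra.trace K L ((α ^ k : Lˣ) : L) = 0)).card := by
    intro N hN
    show {ξ : Lˣ | IsNFree α ξ N ∧ Algebra.trace K L (ξ : L) = 0}.ncard = _
    rw [Set.ncard_eq_toFinset_card', Set.toFinset_setOf]
    rw [← hcard_pow α hα
      (P := fun ξ : Lˣ => IsNFree α ξ N ∧ Algebra.trace K L (ξ : L) = (0 : K)), hord]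
    refine congrArg Finset.card (Finset.filter_congr fun k _ => ?_)
    exact and_congr_left' (hisNFree_iff α N k (by rw [hord]; exact hN))
  -- Zcount for N = Q
  have hZQ : Zcount K L α Q 0
      = (q - 1) * ((Finset.range Q).filter
          (fun r => Nat.Coprime r Q ∧ Algebra.trace K L ((α ^ r : Lˣ) : L) = 0)).card := by
    rw [hZ Q hQdvd, Finset.card_filter, ← hQn, hsum_range_mul]
    have e1 : ∀ j ∈ Finset.range (q - 1), (∑ r ∈ Finset.range Q,
        if Nat.Coprime (r + Q * j) Q ∧ Algebra.trace K L ((α ^ (r + Q * j) : Lˣ) : L) = 0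
        then 1 else 0)
        = ((Finset.range Q).filter
            (fun r => Nat.Coprime r Q ∧ Algebra.trace K L ((α ^ r : Lˣ) : L) = 0)).card := by
      intro j _
      rw [Finset.card_filter]
      refine Finset.sum_congr rfl fun r _ => ?_
      exact if_congr (and_congr (Nat.coprime_add_mul_left_left r Q j) (hTr_per r j)) rfl rfl
    rw [Finset.sum_congr rfl e1, Finset.sum_const, Finset.card_range, smul_eq_mul]
  -- the prime divisors of D divide Q
  have hDprime : ∀ ℓ : ℕ, ℓ.Prime → ℓ ∣ D → ℓ ∣ Q := by
    intro ℓ hp hℓD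
    by_contra hℓQ
    obtain ⟨D', rfl⟩ := hℓD
    have hD'pos : 0 < D' := by
      rcases Nat.eq_zero_or_pos D' with h | h
      · rw [h, Nat.mul_zero] at hD0; omega
      · exact h
    have hD'dvd : D' ∣ q - 1 := (dvd_mul_left D' ℓ).trans hD1
    obtain ⟨t, ht⟩ := hD1
    have hMq : (q - 1) / D' = ℓ * ((q - 1) / (ℓ * D')) := by
      rw [ht, Nat.mul_div_cancel_left t (by positivity : 0 < ℓ * D')]
      have : ℓ * D' * t = D' * (ℓ * t) := by ring
      rw [this, Nat.mul_div_cancel_left _ hD'pos]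
    have hcop : Nat.Coprime ((q - 1) / D') Q := by
      rw [hMq]
      exact Nat.Coprime.mul ((Nat.Prime.coprime_iff_not_dvd hp).mpr hℓQ) hD2
    have hle := hDmin D' hD'pos hD'dvd hcop
    have h2 : 2 ≤ ℓ := hp.two_le
    nlinarith
  have hcoprime_n : ∀ k : ℕ, Nat.Coprime k (q ^ m - 1)
      ↔ (Nat.Coprime k Q ∧ Nat.Coprime k ((q - 1) / D)) := by
    intro k
    rw [← hQn, Nat.coprime_mul_iff_right]
    constructor
    · rintro ⟨h1, h2⟩
      exact ⟨h1, Nat.Coprime.coprime_dvd_right (Nat.div_dvd_of_dvd hD1) h2⟩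
    · rintro ⟨h1, h2⟩
      refine ⟨h1, ?_⟩
      rw [← hDM, Nat.coprime_mul_iff_right]
      refine ⟨?_, h2⟩
      by_contra hnc
      obtain ⟨ℓ, hℓp, hℓd⟩ := Nat.exists_prime_and_dvd hnc
      have hℓQ : ℓ ∣ Q := hDprime ℓ hℓp (hℓd.trans (Nat.gcd_dvd_right _ _))
      have hdg : ℓ ∣ Nat.gcd k Q :=
        Nat.dvd_gcd (hℓd.trans (Nat.gcd_dvd_left _ _)) hℓQ
      rw [h1] at hdg
      exact hℓp.ne_one (Nat.dvd_one.mp hdg)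
  -- counting in an arithmetic progression
  have hcount_j : ∀ r : ℕ, ((Finset.range (q - 1)).filter
      (fun j => Nat.Coprime (r + Q * j) ((q - 1) / D))).card
      = D * Nat.totient ((q - 1) / D) := by
    intro r
    set Mv := (q - 1) / D with hMdef
    have hq1 : q - 1 = Mv * D := (Nat.div_mul_cancel hD1).symm
    rw [Finset.card_filter, hq1, hsum_range_mul]
    have e1 : ∀ bb ∈ Finset.range D, (∑ a ∈ Finset.range Mv,
        if Nat.Coprime (r + Q * (a + Mv * bb)) Mv then 1 else 0)
        = Nat.totient Mv := by
      intro bb _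
      have e2 : ∀ a : ℕ, (if Nat.Coprime (r + Q * (a + Mv * bb)) Mv
          then 1 else 0)
          = (if Nat.Coprime (r + Q * a) Mv then 1 else 0) := by
        intro a
        have harg : r + Q * (a + Mv * bb)
            = (r + Q * a) + Mv * (Q * bb) := by ring
        rw [harg]
        exact if_congr (Nat.coprime_add_mul_left_left _ _ _) rfl rfl
      rw [Finset.sum_congr rfl (fun a _ => e2 a), ← Finset.card_filter,
        hcount_affine _ _ _ hMpos (Nat.Coprime.symm hD2)]
    rw [Finset.sum_congr rfl e1, Finset.sum_const, Finset.card_range, smul_eq_mul]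
  -- Zcount for N = q^m - 1
  have hZn : Zcount K L α (q ^ m - 1) 0
      = D * Nat.totient ((q - 1) / D) * ((Finset.range Q).filter
          (fun r => Nat.Coprime r Q ∧ Algebra.trace K L ((α ^ r : Lˣ) : L) = 0)).card := by
    rw [hZ _ dvd_rfl]
    have hpred : ∀ k ∈ Finset.range (q ^ m - 1),
        ((Nat.Coprime k (q ^ m - 1) ∧ Algebra.trace K L ((α ^ k : Lˣ) : L) = 0)
          ↔ ((Nat.Coprime k Q ∧ Algebra.trace K L ((α ^ k : Lˣ) : L) = 0)
              ∧ Nat.Coprime k ((q - 1) / D))) := by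
      intro k _
      rw [hcoprime_n k]
      tauto
    rw [Finset.filter_congr hpred, Finset.card_filter, ← hQn, hsum_range_mul, Finset.sum_comm]
    have e1 : ∀ r ∈ Finset.range Q, (∑ j ∈ Finset.range (q - 1),
        if (Nat.Coprime (r + Q * j) Q ∧ Algebra.trace K L ((α ^ (r + Q * j) : Lˣ) : L) = 0)
            ∧ Nat.Coprime (r + Q * j) ((q - 1) / D) then 1 else 0)
        = (if Nat.Coprime r Q ∧ Algebra.trace K L ((α ^ r : Lˣ) : L) = 0
            then D * Nat.totient ((q - 1) / D) else 0) := by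
      intro r _
      have e2 : ∀ j : ℕ, ((Nat.Coprime (r + Q * j) Q
          ∧ Algebra.trace K L ((α ^ (r + Q * j) : Lˣ) : L) = 0)
            ∧ Nat.Coprime (r + Q * j) ((q - 1) / D))
          ↔ ((Nat.Coprime r Q ∧ Algebra.trace K L ((α ^ r : Lˣ) : L) = 0)
            ∧ Nat.Coprime (r + Q * j) ((q - 1) / D)) := by
        intro j
        rw [Nat.coprime_add_mul_left_left, hTr_per r j]
      by_cases hc : Nat.Coprime r Q ∧ Algebra.trace K L ((α ^ r : Lˣ) : L) = 0
      · rw [if_pos hc]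
        have e3 : ∀ j ∈ Finset.range (q - 1), (if (Nat.Coprime (r + Q * j) Q
            ∧ Algebra.trace K L ((α ^ (r + Q * j) : Lˣ) : L) = 0)
              ∧ Nat.Coprime (r + Q * j) ((q - 1) / D) then 1 else 0)
            = (if Nat.Coprime (r + Q * j) ((q - 1) / D) then 1 else 0) := by
          intro j _
          exact if_congr ((e2 j).trans (and_iff_right hc)) rfl rfl
        rw [Finset.sum_congr rfl e3, ← Finset.card_filter, hcount_j r]
      · rw [if_neg hc]
        have e3 : ∀ j ∈ Finset.range (q - 1), (if (Nat.Coprime (r + Q * j) Q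
            ∧ Algebra.trace K L ((α ^ (r + Q * j) : Lˣ) : L) = 0)
              ∧ Nat.Coprime (r + Q * j) ((q - 1) / D) then 1 else 0) = 0 := by
          intro j _
          exact if_neg (fun hh => hc ((e2 j).mp hh).1)
        rw [Finset.sum_congr rfl e3, Finset.sum_const_zero]
    rw [Finset.sum_congr rfl e1]
    have e4 : ∀ r : ℕ, (if Nat.Coprime r Q ∧ Algebra.trace K L ((α ^ r : Lˣ) : L) = 0
        then D * Nat.totient ((q - 1) / D) else 0)
        = D * Nat.totient ((q - 1) / D) *
          (if Nat.Coprime r Q ∧ Algebra.trace K L ((α ^ r : Lˣ) : L) = 0 then 1 else 0) := by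
      intro r; split <;> simp
    rw [Finset.sum_congr rfl (fun r _ => e4 r), ← Finset.mul_sum, ← Finset.card_filter]
  -- character theory
  have hcanL : ∀ z : L, canChar p L z = ZMod.stdAddChar (Algebra.trace (ZMod p) L z) := by
    intro z
    rw [ZMod.stdAddChar_apply, ZMod.toCircle_apply]
    rfl
  set ψK : AddChar K ℂ :=
    (ZMod.stdAddChar (N := p)).compAddMonoidHom (Algebra.trace (ZMod p) K).toAddMonoidHom
    with hψK_def
  have hψKdef : ∀ z : K, ψK z = ZMod.stdAddChar (Algebra.trace (ZMod p) K z) := fun z => rfl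
  have htrace_comp : ∀ x : L,
      Algebra.trace (ZMod p) L x = Algebra.trace (ZMod p) K (Algebra.trace K L x) :=
    fun x => (Algebra.trace_trace x).symm
  have hcan0 : canChar p L 0 = 1 := by
    rw [hcanL, map_zero, AddChar.map_zero_eq_one]
  have hterm : ∀ (x : K) (ξ : L),
      canChar p L (algebraMap K L x * ξ) = ψK (x * Algebra.trace K L ξ) := by
    intro x ξ
    rw [hcanL, htrace_comp]
    have e1 : Algebra.trace K L (algebraMap K L x * ξ) = x * Algebra.trace K L ξ := by
      rw [← Algebra.smul_def, map_smul, smul_eq_mul]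
    rw [e1, hψKdef]
  have hnontriv : ∃ w : K, ψK w ≠ 1 := by
    have hprim := (ZMod.isPrimitive_stdAddChar p) (a := 1) one_ne_zero
    have hnt : ∃ a : ZMod p, ZMod.stdAddChar a ≠ 1 := by
      by_contra hcon
      push_neg at hcon
      refine hprim ?_
      ext t
      rw [AddChar.mulShift_apply, AddChar.one_apply, hcon]
    obtain ⟨a, ha⟩ := hnt
    obtain ⟨z, hz⟩ := Algebra.trace_surjective (ZMod p) K a
    exact ⟨z, by rw [hψKdef, hz]; simpa using ha⟩
  have horth : ∀ ξ : L, (∑ x : K, canChar p L (algebraMap K L x * ξ))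
      = if Algebra.trace K L ξ = 0 then (q : ℂ) else 0 := by
    intro ξ
    rw [Finset.sum_congr rfl (fun x _ => hterm x ξ)]
    by_cases h0 : Algebra.trace K L ξ = 0
    · rw [if_pos h0]
      have e1 : ∀ x : K, ψK (x * Algebra.trace K L ξ) = 1 := by
        intro x; rw [h0, mul_zero, AddChar.map_zero_eq_one]
      rw [Finset.sum_congr rfl (fun x _ => e1 x), Finset.sum_const, Finset.card_univ, hK]
      simp
    · rw [if_neg h0]
      have hne : ψK.mulShift (Algebra.trace K L ξ) ≠ 1 := by
        obtain ⟨w, hw⟩ := hnontriv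
        intro hcon
        have h2 := DFunLike.congr_fun hcon ((Algebra.trace K L ξ)⁻¹ * w)
        rw [AddChar.mulShift_apply, AddChar.one_apply, mul_inv_cancel_left₀ h0] at h2
        exact hw h2
      have h3 := AddChar.sum_eq_zero_of_ne_one hne
      calc ∑ x : K, ψK (x * Algebra.trace K L ξ)
          = ∑ x : K, ψK.mulShift (Algebra.trace K L ξ) x := by
            refine Finset.sum_congr rfl fun x _ => ?_
            rw [AddChar.mulShift_apply, mul_comm]
        _ = 0 := h3
  -- the generator bu of Kˣ
  have hbu_gen : ∀ u : Kˣ, u ∈ Subgroup.zpowers (Units.mk0 b hb0) := by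
    have h1 : Units.map (algebraMap K L : K →* L) (Units.mk0 b hb0) = α ^ Q := by
      refine Units.ext ?_
      rw [Units.coe_map]
      exact hb
    have h2 : orderOf (α ^ Q) = q - 1 := by
      rw [orderOf_pow, hord, Nat.gcd_eq_right hQdvd, ← hQn, Nat.mul_div_cancel_left _ hQpos]
    have h3 : orderOf (Units.mk0 b hb0) = q - 1 := by
      rw [← orderOf_injective (Units.map (algebraMap K L : K →* L))
        (Units.map_injective (algebraMap K L).injective) (Units.mk0 b hb0), h1, h2]
    have hcard : Nat.card (Subgroup.zpowers (Units.mk0 b hb0)) = Nat.card Kˣ := by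
      rw [Nat.card_zpowers, h3, Nat.card_eq_fintype_card, Fintype.card_units, hK]
    intro u
    rw [Subgroup.eq_top_of_card_eq _ hcard]
    trivial
  have hordbu : orderOf (Units.mk0 b hb0) = q - 1 := by
    have h1 : Units.map (algebraMap K L : K →* L) (Units.mk0 b hb0) = α ^ Q := by
      refine Units.ext ?_
      rw [Units.coe_map]
      exact hb
    have h2 : orderOf (α ^ Q) = q - 1 := by
      rw [orderOf_pow, hord, Nat.gcd_eq_right hQdvd, ← hQn, Nat.mul_div_cancel_left _ hQpos]
    rw [← orderOf_injective (Units.map (algebraMap K L : K →* L))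
      (Units.map_injective (algebraMap K L).injective) (Units.mk0 b hb0), h1, h2]
  -- summing the character over a coset of the subfield
  have hj_sum : ∀ ξ : Lˣ, (∑ j ∈ Finset.range (q - 1),
      canChar p L (((α ^ (Q * j) : Lˣ) : L) * (ξ : L)))
      = (if Algebra.trace K L (ξ : L) = 0 then (q : ℂ) else 0) - 1 := by
    intro ξ
    have e1 : (∑ j ∈ Finset.range (q - 1), canChar p L (((α ^ (Q * j) : Lˣ) : L) * (ξ : L)))
        = ∑ j ∈ Finset.range (orderOf (Units.mk0 b hb0)),
            canChar p L (algebraMap K L (((Units.mk0 b hb0) ^ j : Kˣ) : K) * (ξ : L)) := by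
      rw [hordbu]
      refine Finset.sum_congr rfl fun j _ => ?_
      rw [hpowQ j, Units.val_pow_eq_pow_val]
      rfl
    rw [e1, hsum_pow (Units.mk0 b hb0) hbu_gen
      (f := fun u : Kˣ => canChar p L (algebraMap K L (u : K) * (ξ : L)))]
    have e2 := hsum_K_split (g := fun x : K => canChar p L (algebraMap K L x * (ξ : L)))
    have e3 : canChar p L (algebraMap K L (0 : K) * (ξ : L)) = 1 := by
      rw [map_zero, zero_mul, hcan0]
    have e4 : (if Algebra.trace K L (ξ : L) = 0 then (q : ℂ) else 0)
        = 1 + ∑ u : Kˣ, canChar p L (algebraMap K L (u : K) * (ξ : L)) := by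
      rw [← horth (ξ : L), e2, e3]
    rw [eq_sub_iff_add_eq, add_comm, ← e4]
  -- Gaussian periods as exponent sums
  have hgauss : ∀ d ∈ Q.divisors, gaussPeriod p L α d 0
      = ∑ k ∈ (Finset.range (q ^ m - 1)).filter (fun k => d ∣ k),
          canChar p L ((α ^ k : Lˣ) : L) := by
    intro d hd
    obtain ⟨hdQ, hQ0⟩ := Nat.mem_divisors.mp hd
    have hdn : d ∣ q ^ m - 1 := hdQ.trans hQdvd
    unfold gaussPeriod
    symm
    refine Finset.sum_bij (fun k _ => α ^ k) ?_ ?_ ?_ (fun _ _ => rfl)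
    · intro k hk
      obtain ⟨hk1, hk2⟩ := Finset.mem_filter.mp hk
      refine Finset.mem_filter.mpr ⟨Finset.mem_univ _, ⟨k / d, ?_⟩⟩
      rw [zpow_zero, one_mul, ← pow_mul, Nat.mul_div_cancel' hk2]
    · intro k hk k' hk' h
      refine pow_injOn_Iio_orderOf ?_ ?_ h
      · rw [hord]; exact Set.mem_Iio.mpr (Finset.mem_range.mp (Finset.mem_filter.mp hk).1)
      · rw [hord]; exact Set.mem_Iio.mpr (Finset.mem_range.mp (Finset.mem_filter.mp hk').1)
    · intro x hx
      obtain ⟨i, hi⟩ := (Finset.mem_filter.mp hx).2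
      rw [zpow_zero, one_mul, ← pow_mul] at hi
      refine ⟨(d * i) % (q ^ m - 1), Finset.mem_filter.mpr
        ⟨Finset.mem_range.mpr (Nat.mod_lt _ hnpos),
          (Nat.dvd_mod_iff hdn).mpr ⟨i, rfl⟩⟩, ?_⟩
      show α ^ ((d * i) % (q ^ m - 1)) = x
      rw [← hord, pow_mod_orderOf, ← hi]
  -- the main character-sum identity
  have hDelta : DeltaSum p L α Q 0
      = (q : ℂ) * (((Finset.range Q).filter
          (fun r => Nat.Coprime r Q ∧ Algebra.trace K L ((α ^ r : Lˣ) : L) = 0)).card : ℂ)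
        - (Nat.totient Q : ℂ) := by
    unfold DeltaSum
    rw [Finset.sum_congr rfl (fun d hd => by rw [hgauss d hd])]
    have st1 : ∀ d ∈ Q.divisors, ((ArithmeticFunction.moebius d : ℤ) : ℂ)
        * (∑ k ∈ (Finset.range (q ^ m - 1)).filter (fun k => d ∣ k),
            canChar p L ((α ^ k : Lˣ) : L))
        = ∑ k ∈ Finset.range (q ^ m - 1),
            (if d ∣ k then ((ArithmeticFunction.moebius d : ℤ) : ℂ)
              * canChar p L ((α ^ k : Lˣ) : L) else 0) := by
      intro d _
      rw [Finset.mul_sum, Finset.sum_filter]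
    rw [Finset.sum_congr rfl st1, Finset.sum_comm]
    have st2 : ∀ k ∈ Finset.range (q ^ m - 1),
        (∑ d ∈ Q.divisors, if d ∣ k then ((ArithmeticFunction.moebius d : ℤ) : ℂ)
          * canChar p L ((α ^ k : Lˣ) : L) else 0)
        = (if Nat.Coprime k Q then (1 : ℂ) else 0) * canChar p L ((α ^ k : Lˣ) : L) := by
      intro k _
      have e1 : (∑ d ∈ Q.divisors, if d ∣ k then ((ArithmeticFunction.moebius d : ℤ) : ℂ)
            * canChar p L ((α ^ k : Lˣ) : L) else 0)
          = (∑ d ∈ Q.divisors.filter (fun d => d ∣ k),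
              ((ArithmeticFunction.moebius d : ℤ) : ℂ)) * canChar p L ((α ^ k : Lˣ) : L) := by
        rw [Finset.sum_mul, Finset.sum_filter]
      rw [e1]
      congr 1
      have hfil : Q.divisors.filter (fun d => d ∣ k) = (Nat.gcd Q k).divisors := by
        ext d
        simp only [Finset.mem_filter, Nat.mem_divisors, Nat.dvd_gcd_iff]
        constructor
        · rintro ⟨⟨h1, h2⟩, h3⟩
          exact ⟨⟨h1, h3⟩, fun hg => h2 ((Nat.gcd_eq_zero_iff.mp hg).1)⟩
        · rintro ⟨⟨h1, h3⟩, _⟩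
          exact ⟨⟨h1, hQpos.ne'⟩, h3⟩
      rw [hfil]
      have hmz := hmoebius_sum (Nat.gcd Q k)
      have e2 : (∑ d ∈ (Nat.gcd Q k).divisors, ((ArithmeticFunction.moebius d : ℤ) : ℂ))
          = (((if Nat.gcd Q k = 1 then 1 else 0 : ℤ)) : ℂ) := by
        rw [← hmz]
        push_cast
        rfl
      rw [e2]
      have hiff : Nat.gcd Q k = 1 ↔ Nat.Coprime k Q := by
        rw [Nat.Coprime, Nat.gcd_comm]
      rw [apply_ite (fun z : ℤ => (z : ℂ)), if_congr hiff rfl rfl]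
      simp
    rw [Finset.sum_congr rfl st2]
    have st3 : (∑ k ∈ Finset.range (q ^ m - 1),
        (if Nat.Coprime k Q then (1 : ℂ) else 0) * canChar p L ((α ^ k : Lˣ) : L))
        = ∑ r ∈ Finset.range Q, ∑ j ∈ Finset.range (q - 1),
            (if Nat.Coprime r Q then (1 : ℂ) else 0)
              * canChar p L (((α ^ (Q * j) : Lˣ) : L) * ((α ^ r : Lˣ) : L)) := by
      rw [← hQn, hsum_range_mul, Finset.sum_comm]
      refine Finset.sum_congr rfl fun r _ => Finset.sum_congr rfl fun j _ => ?_
      congr 1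
      · exact if_congr (Nat.coprime_add_mul_left_left r Q j) rfl rfl
      · rw [pow_add, Units.val_mul, mul_comm]
    rw [st3]
    have st4 : ∀ r ∈ Finset.range Q, (∑ j ∈ Finset.range (q - 1),
        (if Nat.Coprime r Q then (1 : ℂ) else 0)
          * canChar p L (((α ^ (Q * j) : Lˣ) : L) * ((α ^ r : Lˣ) : L)))
        = (if Nat.Coprime r Q then (1 : ℂ) else 0)
          * ((if Algebra.trace K L ((α ^ r : Lˣ) : L) = 0 then (q : ℂ) else 0) - 1) := by
      intro r _
      rw [← Finset.mul_sum, hj_sum (α ^ r)]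
    rw [Finset.sum_congr rfl st4]
    have expand : ∀ r : ℕ, (if Nat.Coprime r Q then (1 : ℂ) else 0)
        * ((if Algebra.trace K L ((α ^ r : Lˣ) : L) = 0 then (q : ℂ) else 0) - 1)
        = (q : ℂ) * (if Nat.Coprime r Q ∧ Algebra.trace K L ((α ^ r : Lˣ) : L) = 0
            then (1 : ℂ) else 0)
          - (if Nat.Coprime r Q then (1 : ℂ) else 0) := by
      intro r
      by_cases h1 : Nat.Coprime r Q
      · by_cases h2 : Algebra.trace K L ((α ^ r : Lˣ) : L) = 0
        · rw [if_pos h1, if_pos h2, if_pos (⟨h1, h2⟩ : _ ∧ _)]; ring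
        · have hnc : ¬ (Nat.Coprime r Q ∧ Algebra.trace K L ((α ^ r : Lˣ) : L) = 0) :=
            fun hh => h2 hh.2
          rw [if_pos h1, if_neg h2, if_neg hnc]; ring
      · have hnc : ¬ (Nat.Coprime r Q ∧ Algebra.trace K L ((α ^ r : Lˣ) : L) = 0) :=
          fun hh => h1 hh.1
        rw [if_neg h1, if_neg hnc]; ring
    rw [Finset.sum_congr rfl (fun r _ => expand r), Finset.sum_sub_distrib, ← Finset.mul_sum]
    congr 1
    · congr 1
      rw [Finset.sum_boole]
    · rw [Finset.sum_boole]
      congr 1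
      have e5 : (Finset.range Q).filter (fun r => Nat.Coprime r Q)
          = (Finset.range Q).filter (fun a => Q.Coprime a) :=
        Finset.filter_congr fun x _ => by rw [Nat.coprime_comm]
      rw [e5, ← Nat.totient_eq_card_coprime]
  -- final assembly
  have hq0 : (q : ℂ) ≠ 0 := Nat.cast_ne_zero.mpr (by omega)
  have hq1c : ((q : ℂ) - 1) = ((q - 1 : ℕ) : ℂ) := by
    rw [Nat.cast_sub (by omega : 1 ≤ q)]
    norm_num
  have hq1ne : ((q : ℂ) - 1) ≠ 0 := by
    rw [hq1c]
    exact Nat.cast_ne_zero.mpr (by omega)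
  have hA_char : (Nat.totient Q : ℂ) + DeltaSum p L α Q 0
      = (q : ℂ) * (((Finset.range Q).filter
          (fun r => Nat.Coprime r Q ∧ Algebra.trace K L ((α ^ r : Lˣ) : L) = 0)).card : ℂ) := by
    rw [hDelta]
    ring
  constructor
  · rw [hZn, hA_char]
    push_cast
    field_simp
  · rw [hZn, hZQ, hq1c]
    push_cast
    have hq1ne' : ((q - 1 : ℕ) : ℂ) ≠ 0 := by rw [← hq1c]; exact hq1ne
    field_simp
end

section
/- Let b and m be integers with b > 1 and m > 1. Then Rad(b^m - 1) = Rad((b^m - 1)/(b - 1)) if and only if every prime factor of b - 1 divides m. -/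
open scoped BigOperators
open scoped Classical

/-- `Rad(b^m - 1) = Rad((b^m-1)/(b-1))` iff every prime factor of
`b - 1` divides `m`. -/
theorem stmt_16 (b m : ℕ) (hb : 1 < b) (hm : 1 < m) :
    Rad (b ^ m - 1) = Rad ((b ^ m - 1) / (b - 1)) ↔
      ∀ ℓ : ℕ, ℓ.Prime → ℓ ∣ b - 1 → ℓ ∣ m := by
  have hb1 : 0 < b - 1 := by omega
  have hNpos : 0 < b ^ m - 1 := by
    have : 1 < b ^ m := Nat.one_lt_pow (by omega) hb
    omega
  have hdvd : b - 1 ∣ b ^ m - 1 := by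
    simpa only [one_pow] using Nat.sub_dvd_pow_sub_pow b 1 m
  set S := ∑ i ∈ Finset.range m, b ^ i with hSdef
  have hS : (b - 1) * S = b ^ m - 1 := by
    have h := geom_sum_mul (b : ℤ) m
    have h2 : ((b - 1 : ℕ) : ℤ) * ((S : ℕ) : ℤ) = ((b ^ m - 1 : ℕ) : ℤ) := by
      rw [hSdef, Nat.cast_sub hb.le, Nat.cast_sub (Nat.one_le_pow _ _ (by omega))]
      push_cast
      rw [mul_comm]
      simpa using h
    exact_mod_cast h2
  have hAS : (b ^ m - 1) / (b - 1) = S := by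
    rw [← hS, Nat.mul_div_cancel_left _ hb1]
  have hSpos : 0 < S := by
    rw [hSdef]
    exact Finset.sum_pos (fun i _ => pow_pos (by omega) i) ⟨0, Finset.mem_range.mpr (by omega)⟩
  have key : ∀ ℓ : ℕ, ℓ.Prime → ℓ ∣ b - 1 → (ℓ ∣ S ↔ ℓ ∣ m) := by
    intro ℓ hp hd
    haveI : NeZero ℓ := ⟨hp.ne_zero⟩
    have hb' : (b : ZMod ℓ) = 1 := by
      have h0 : ((b - 1 : ℕ) : ZMod ℓ) = 0 := (ZMod.natCast_eq_zero_iff _ _).mpr hd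
      have hb2 : b - 1 + 1 = b := by omega
      calc (b : ZMod ℓ) = ((b - 1 + 1 : ℕ) : ZMod ℓ) := by rw [hb2]
        _ = 1 := by push_cast [h0]; ring
    have hcast : (S : ZMod ℓ) = (m : ZMod ℓ) := by
      rw [hSdef]
      push_cast [hb']
      simp
    rw [← ZMod.natCast_eq_zero_iff, ← ZMod.natCast_eq_zero_iff, hcast]
  have hRad : ∀ x y : ℕ, Rad x = Rad y ↔ x.primeFactors = y.primeFactors := by
    intro x y
    constructor
    · intro h
      have h2 := congrArg Nat.primeFactors h
      rwa [Rad, Rad, Nat.primeFactors_prod (fun p hp => Nat.prime_of_mem_primeFactors hp),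
        Nat.primeFactors_prod (fun p hp => Nat.prime_of_mem_primeFactors hp)] at h2
    · intro h; rw [Rad, Rad, h]
  rw [hAS, hRad]
  have hfac : (b ^ m - 1).primeFactors = (b - 1).primeFactors ∪ S.primeFactors := by
    rw [← hS, Nat.primeFactors_mul (by omega) (by omega)]
  constructor
  · intro h ℓ hp hd
    rw [← key ℓ hp hd]
    have : ℓ ∈ (b ^ m - 1).primeFactors := by
      rw [hfac, Finset.mem_union]
      exact Or.inl (Nat.mem_primeFactors.mpr ⟨hp, hd, by omega⟩)
    rw [h] at this
    exact (Nat.mem_primeFactors.mp this).2.1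
  · intro h
    rw [hfac]
    apply Finset.Subset.antisymm
    · intro ℓ hl
      rcases Finset.mem_union.mp hl with hl | hl
      · obtain ⟨hp, hd, -⟩ := Nat.mem_primeFactors.mp hl
        exact Nat.mem_primeFactors.mpr ⟨hp, ((key ℓ hp hd).mpr (h ℓ hp hd)), by omega⟩
      · exact hl
    · exact Finset.subset_union_right
end

section
/- Let q be a power of a prime, m a positive integer, Q = (q^m - 1)/(q - 1), and let D be the smallest positive divisor of q - 1 such that (q - 1)/D is coprime to Q. Let N be a positive divisor of q^m - 1 with DQ | N. Then Z_{q,m,N}(0) = ((q^m - 1)/N)·P_{q,m,N}(0). In particular, P_{q,m,q^m-1}(0) = ( φ(q^m - 1)/φ(DQ) )·P_{q,m,DQ}(0). -/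
open scoped BigOperators
open scoped Classical

private lemma cop_mod {a n : ℕ} : Nat.Coprime (a % n) n ↔ Nat.Coprime a n := by
  unfold Nat.Coprime
  rw [← Nat.gcd_rec, Nat.gcd_comm]

private lemma cop_modEq {a b n : ℕ} (h : a ≡ b [MOD n]) :
    Nat.Coprime a n ↔ Nat.Coprime b n := by
  rw [← cop_mod (a := a), ← cop_mod (a := b), Nat.ModEq] at *
  rw [h]

private lemma count_mul_unit (N u u' : ℕ) (hN : 0 < N)
    (hu : Nat.Coprime u N) (hu' : Nat.Coprime u' N) (huu' : u * u' ≡ 1 [MOD N])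
    (S T : ℕ → Prop)
    (hST : ∀ j, Nat.Coprime j N → (S j ↔ T ((u * j) % N))) :
    ((Finset.range N).filter (fun j => Nat.Coprime j N ∧ S j)).card
      = ((Finset.range N).filter (fun j => Nat.Coprime j N ∧ T j)).card := by
  have key : ∀ a b : ℕ, a * ((b) % N) ≡ a * b [MOD N] := fun a b =>
    (Nat.mod_modEq b N).mul_left a
  apply Finset.card_nbij' (i := fun j => (u * j) % N) (j := fun j => (u' * j) % N)
  · intro a ha
    simp only [Finset.mem_coe, Finset.mem_filter, Finset.mem_range] at ha ⊢
    obtain ⟨haN, hacop, haS⟩ := ha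
    refine ⟨Nat.mod_lt _ hN, cop_mod.mpr (hu.mul hacop), ?_⟩
    exact (hST a hacop).mp haS
  · intro b hb
    simp only [Finset.mem_coe, Finset.mem_filter, Finset.mem_range] at hb ⊢
    obtain ⟨hbN, hbcop, hbT⟩ := hb
    have hcop' : Nat.Coprime ((u' * b) % N) N := cop_mod.mpr (hu'.mul hbcop)
    refine ⟨Nat.mod_lt _ hN, hcop', ?_⟩
    rw [hST _ hcop']
    have h1 : (u * ((u' * b) % N)) ≡ b [MOD N] := by
      calc u * ((u' * b) % N) ≡ u * (u' * b) [MOD N] := key u (u' * b)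
        _ = u * u' * b := by ring
        _ ≡ 1 * b [MOD N] := huu'.mul_right b
        _ = b := by ring
    have : (u * ((u' * b) % N)) % N = b := by
      rw [h1]; exact Nat.mod_eq_of_lt hbN
    rwa [this]
  · intro a ha
    simp only [Finset.mem_coe, Finset.mem_filter, Finset.mem_range] at ha
    have h1 : u' * ((u * a) % N) ≡ a [MOD N] := by
      calc u' * ((u * a) % N) ≡ u' * (u * a) [MOD N] := key u' (u * a)
        _ = u * u' * a := by ring
        _ ≡ 1 * a [MOD N] := huu'.mul_right a
        _ = a := by ring
    show u' * ((u * a) % N) % N = a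
    rw [h1]; exact Nat.mod_eq_of_lt ha.1
  · intro b hb
    simp only [Finset.mem_coe, Finset.mem_filter, Finset.mem_range] at hb
    have h1 : u * ((u' * b) % N) ≡ b [MOD N] := by
      calc u * ((u' * b) % N) ≡ u * (u' * b) [MOD N] := key u (u' * b)
        _ = u * u' * b := by ring
        _ ≡ 1 * b [MOD N] := huu'.mul_right b
        _ = b := by ring
    show u * ((u' * b) % N) % N = b
    rw [h1]; exact Nat.mod_eq_of_lt hb.1

private lemma exists_unit (Q N e : ℕ) (hN0 : 0 < N) (hQN : Q ∣ N) (he : Nat.Coprime e Q) :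
    ∃ u u' : ℕ, Nat.Coprime u N ∧ Nat.Coprime u' N ∧ u * u' ≡ 1 [MOD N] ∧
      e * u ≡ 1 [MOD Q] := by
  haveI : NeZero N := ⟨hN0.ne'⟩
  set v : (ZMod Q)ˣ := ZMod.unitOfCoprime e he with hv
  obtain ⟨U, hU⟩ := ZMod.unitsMap_surjective hQN v⁻¹
  refine ⟨((U : ZMod N)).val, (((U⁻¹ : (ZMod N)ˣ) : ZMod N)).val,
    ZMod.val_coe_unit_coprime U, ZMod.val_coe_unit_coprime U⁻¹, ?_, ?_⟩
  · rw [← ZMod.natCast_eq_natCast_iff]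
    push_cast
    rw [ZMod.natCast_val, ZMod.natCast_val, ZMod.cast_id, ZMod.cast_id]
    simp
  · rw [← ZMod.natCast_eq_natCast_iff]
    push_cast
    rw [ZMod.natCast_val]
    have h2 : (ZMod.cast ((U : ZMod N)) : ZMod Q) = ((v⁻¹ : (ZMod Q)ˣ) : ZMod Q) := by
      rw [← ZMod.castHom_apply (h := hQN), ← hU, ZMod.unitsMap_def]
      rfl
    rw [h2]
    have h3 : (e : ZMod Q) = (v : ZMod Q) := (ZMod.coe_unitOfCoprime e he).symm
    rw [h3, ← Units.val_mul, mul_inv_cancel]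
    simp

private lemma Zp_eq_Pp (Q N e : ℕ) (hQ0 : 0 < Q) (hN0 : 0 < N) (hQN : Q ∣ N)
    (he : Nat.Coprime e Q) (S : ℕ → Prop)
    (hS : ∀ a b, a ≡ b [MOD Q] → (S a ↔ S b)) :
    ((Finset.range N).filter (fun j => Nat.Coprime j N ∧ S j)).card
      = ((Finset.range N).filter (fun j => Nat.Coprime j N ∧ S (e * j))).card := by
  obtain ⟨u, u', hu, hu', huu', heu⟩ := exists_unit Q N e hN0 hQN he
  apply count_mul_unit N u u' hN0 hu hu' huu'
  intro j hj
  apply hS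
  calc j = 1 * j := (one_mul j).symm
    _ ≡ (e * u) * j [MOD Q] := (heu.mul_right j).symm
    _ = e * (u * j) := by ring
    _ ≡ e * ((u * j) % N) [MOD Q] := by
        refine Nat.ModEq.mul_left e ?_
        exact (Nat.ModEq.of_dvd hQN (Nat.mod_modEq (u * j) N)).symm

private lemma Z_fiber (Q N e : ℕ) (hN0 : 0 < N) (hQN : Q ∣ N) (S : ℕ → Prop)
    (hS : ∀ a b, a ≡ b [MOD Q] → (S a ↔ S b)) :
    ((Finset.range (N * e)).filter (fun k => Nat.Coprime k N ∧ S k)).card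
      = e * ((Finset.range N).filter (fun j => Nat.Coprime j N ∧ S j)).card := by
  have key : ((Finset.range (N * e)).filter (fun k => Nat.Coprime k N ∧ S k)).card
      = (Finset.range e ×ˢ (Finset.range N).filter (fun j => Nat.Coprime j N ∧ S j)).card := by
    apply Finset.card_nbij' (i := fun k => (k / N, k % N)) (j := fun x => x.2 + N * x.1)
    · intro a ha
      simp only [Finset.mem_coe, Finset.mem_filter, Finset.mem_range, Finset.mem_product] at ha ⊢
      obtain ⟨haN, hacop, haS⟩ := ha
      refine ⟨?_, Nat.mod_lt _ hN0, cop_mod.mpr hacop, ?_⟩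
      · rw [Nat.div_lt_iff_lt_mul hN0]; rw [mul_comm]; exact haN
      · exact (hS _ _ (Nat.ModEq.of_dvd hQN (Nat.mod_modEq a N))).mpr haS
    · intro x hx
      simp only [Finset.mem_coe, Finset.mem_filter, Finset.mem_range, Finset.mem_product] at hx ⊢
      obtain ⟨hx2, hx1, hxcop, hxS⟩ := hx
      have hmod : x.2 + N * x.1 ≡ x.2 [MOD Q] := by
        have hz : (N * x.1) ≡ 0 [MOD Q] :=
          (Nat.modEq_zero_iff_dvd).mpr (Dvd.dvd.mul_right hQN x.1)
        calc x.2 + N * x.1 ≡ x.2 + 0 [MOD Q] := Nat.ModEq.add_left x.2 hz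
          _ = x.2 := by ring
      have hmodN : x.2 + N * x.1 ≡ x.2 [MOD N] := by
        have hz : (N * x.1) ≡ 0 [MOD N] := (Nat.modEq_zero_iff_dvd).mpr (Dvd.intro x.1 rfl)
        calc x.2 + N * x.1 ≡ x.2 + 0 [MOD N] := Nat.ModEq.add_left x.2 hz
          _ = x.2 := by ring
      refine ⟨?_, (cop_modEq hmodN).mpr hxcop, (hS _ _ hmod).mpr hxS⟩
      calc x.2 + N * x.1 < N + N * x.1 := by omega
        _ = N * (x.1 + 1) := by ring
        _ ≤ N * e := Nat.mul_le_mul_left N hx2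
    · intro a _
      show a % N + N * (a / N) = a
      rw [add_comm]
      exact Nat.div_add_mod a N
    · intro x hx
      simp only [Finset.mem_coe, Finset.mem_filter, Finset.mem_range, Finset.mem_product] at hx
      have h1 : (x.2 + N * x.1) % N = x.2 := by
        rw [Nat.add_mul_mod_self_left]
        exact Nat.mod_eq_of_lt hx.2.1
      have h2 : (x.2 + N * x.1) / N = x.1 := by
        rw [Nat.add_mul_div_left _ _ hN0, Nat.div_eq_of_lt hx.2.1, zero_add]
      show ((x.2 + N * x.1) / N, (x.2 + N * x.1) % N) = x
      rw [h1, h2]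
  rw [key, Finset.card_product, Finset.card_range]

private lemma P_reindex (N e : ℕ) (hN0 : 0 < N) (he0 : 0 < e) (S : ℕ → Prop) :
    ((Finset.range (N * e)).filter (fun k => (N * e).gcd k = e ∧ S k)).card
      = ((Finset.range N).filter (fun j => Nat.Coprime j N ∧ S (e * j))).card := by
  apply Finset.card_nbij' (i := fun k => k / e) (j := fun j => e * j)
  · intro a ha
    simp only [Finset.mem_coe, Finset.mem_filter, Finset.mem_range] at ha ⊢
    obtain ⟨haM, hag, haS⟩ := ha
    have hea : e ∣ a := hag ▸ Nat.gcd_dvd_right _ _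
    obtain ⟨m, rfl⟩ := hea
    have hg : e * Nat.gcd N m = e * 1 := by
      rw [mul_comm N e, Nat.gcd_mul_left] at hag
      rw [mul_one]; exact hag
    have hgcd : Nat.gcd N m = 1 := Nat.eq_of_mul_eq_mul_left he0 hg
    have hm : e * m / e = m := Nat.mul_div_cancel_left m he0
    rw [hm]
    refine ⟨?_, Nat.coprime_comm.mp hgcd, haS⟩
    have h' : e * m < e * N := by rw [mul_comm e N]; exact haM
    exact lt_of_mul_lt_mul_left h' (Nat.zero_le e)
  · intro j hj
    simp only [Finset.mem_coe, Finset.mem_filter, Finset.mem_range] at hj ⊢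
    obtain ⟨hjN, hjcop, hjS⟩ := hj
    refine ⟨?_, ?_, hjS⟩
    · rw [mul_comm N e]
      exact (Nat.mul_lt_mul_left he0).mpr hjN
    · rw [mul_comm N e, Nat.gcd_mul_left, Nat.coprime_comm.mp hjcop, mul_one]
  · intro a ha
    simp only [Finset.mem_coe, Finset.mem_filter, Finset.mem_range] at ha
    have hea : e ∣ a := ha.2.1 ▸ Nat.gcd_dvd_right _ _
    exact Nat.mul_div_cancel' hea
  · intro j _
    exact Nat.mul_div_cancel_left j he0

private lemma val_cast_down {n d : ℕ} [NeZero n] (h : d ∣ n) (U : (ZMod n)ˣ) :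
    (((U : ZMod n).val : ℕ) : ZMod d) = ((ZMod.unitsMap h U : (ZMod d)ˣ) : ZMod d) := by
  rw [ZMod.natCast_val, ZMod.unitsMap_def]
  rfl

private lemma fiber_eq (n d : ℕ) (hd : d ∣ n) (hn : 0 < n) (hd0 : 0 < d)
    {r r' : ℕ} (hr : r < d) (hr' : r' < d)
    (hcr : Nat.Coprime r d) (hcr' : Nat.Coprime r' d) :
    ((Finset.range n).filter (fun j => Nat.Coprime j n ∧ j % d = r)).card
      ≤ ((Finset.range n).filter (fun j => Nat.Coprime j n ∧ j % d = r')).card := by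
  haveI : NeZero n := ⟨hn.ne'⟩
  set R : (ZMod d)ˣ := ZMod.unitOfCoprime r hcr with hR
  set R' : (ZMod d)ˣ := ZMod.unitOfCoprime r' hcr' with hR'
  obtain ⟨W, hW⟩ := ZMod.unitsMap_surjective hd (R' * R⁻¹)
  set w : ℕ := ((W : ZMod n)).val with hw
  have hwcop : Nat.Coprime w n := ZMod.val_coe_unit_coprime W
  apply Finset.card_le_card_of_injOn (fun j => (w * j) % n)
  · intro a ha
    simp only [Finset.mem_coe, Finset.mem_filter, Finset.mem_range] at ha ⊢
    obtain ⟨haN, hacop, har⟩ := ha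
    refine ⟨Nat.mod_lt _ hn, cop_mod.mpr (hwcop.mul hacop), ?_⟩
    have h1 : (w * a) % n % d = (w * a) % d := Nat.mod_mod_of_dvd _ hd
    rw [h1]
    have h2 : ((w * a : ℕ) : ZMod d) = ((r' : ℕ) : ZMod d) := by
      push_cast
      have hwc : ((w : ℕ) : ZMod d) = ((R' * R⁻¹ : (ZMod d)ˣ) : ZMod d) := by
        rw [hw, val_cast_down hd W, hW]
      have hac : ((a : ℕ) : ZMod d) = ((R : (ZMod d)ˣ) : ZMod d) := by
        rw [← ZMod.natCast_mod a d, har, hR, ZMod.coe_unitOfCoprime]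
      rw [hwc, hac, hR', ← Units.val_mul, mul_assoc, inv_mul_cancel, mul_one,
        ZMod.coe_unitOfCoprime]
    rw [ZMod.natCast_eq_natCast_iff] at h2
    rw [Nat.ModEq] at h2
    rw [h2, Nat.mod_eq_of_lt hr']
  · intro a ha b hb hab
    simp only [Finset.mem_coe, Finset.mem_filter, Finset.mem_range] at ha hb
    have : w * a ≡ w * b [MOD n] := hab
    have := Nat.ModEq.cancel_left_of_coprime (by rwa [Nat.coprime_comm] at hwcop) this
    rw [Nat.ModEq, Nat.mod_eq_of_lt ha.1, Nat.mod_eq_of_lt hb.1] at this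
    exact this

private lemma fiber_count (n d : ℕ) (hd : d ∣ n) (hn : 0 < n) (hd0 : 0 < d) (A : ℕ → Prop)
    (hA : ∀ a b, a ≡ b [MOD d] → (A a ↔ A b)) :
    ((Finset.range n).filter (fun j => Nat.Coprime j n ∧ A j)).card * d.totient
      = n.totient * ((Finset.range d).filter (fun r => Nat.Coprime r d ∧ A r)).card := by
  classical
  set F : ℕ → ℕ := fun r =>
    ((Finset.range n).filter (fun j => Nat.Coprime j n ∧ j % d = r)).card with hF
  have hFconst : ∀ r r', r < d → r' < d → Nat.Coprime r d → Nat.Coprime r' d →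
      F r = F r' := fun r r' h1 h2 h3 h4 =>
    le_antisymm (fiber_eq n d hd hn hd0 h1 h2 h3 h4) (fiber_eq n d hd hn hd0 h2 h1 h4 h3)
  have hcop_dn : ∀ j : ℕ, Nat.Coprime j n → Nat.Coprime (j % d) d := fun j hj =>
    cop_mod.mpr (Nat.Coprime.coprime_dvd_right hd hj)
  -- the distinguished fiber value
  have h1d : (1 % d) < d := Nat.mod_lt _ hd0
  have h1cop : Nat.Coprime (1 % d) d := cop_mod.mpr (Nat.coprime_one_left d)
  set c : ℕ := F (1 % d) with hc
  -- (i) LHS count as sum over Sd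
  set Sd := (Finset.range d).filter (fun r => Nat.Coprime r d ∧ A r) with hSd
  have hi : ((Finset.range n).filter (fun j => Nat.Coprime j n ∧ A j)).card
      = ∑ r ∈ Sd, (((Finset.range n).filter (fun j => Nat.Coprime j n ∧ A j)).filter
          (fun j => j % d = r)).card := by
    apply Finset.card_eq_sum_card_fiberwise
    intro j hj
    simp only [Finset.mem_coe, Finset.mem_filter, Finset.mem_range] at hj
    simp only [hSd, Finset.mem_coe, Finset.mem_filter, Finset.mem_range]
    exact ⟨Nat.mod_lt _ hd0, hcop_dn j hj.2.1,
      (hA _ _ (Nat.mod_modEq j d)).mpr hj.2.2⟩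
  have hi2 : ∀ r ∈ Sd, (((Finset.range n).filter (fun j => Nat.Coprime j n ∧ A j)).filter
      (fun j => j % d = r)).card = F r := by
    intro r hrSd
    simp only [hSd, Finset.mem_filter, Finset.mem_range] at hrSd
    congr 1
    ext j
    simp only [Finset.mem_filter, Finset.mem_range]
    constructor
    · rintro ⟨⟨h1, h2, h3⟩, h4⟩; exact ⟨h1, h2, h4⟩
    · rintro ⟨h1, h2, h3⟩
      refine ⟨⟨h1, h2, ?_⟩, h3⟩
      have : j ≡ r [MOD d] := by rw [Nat.ModEq, h3, Nat.mod_eq_of_lt hrSd.1]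
      exact (hA _ _ this).mpr hrSd.2.2
  -- (iii) totient n as sum over Ud
  set Ud := (Finset.range d).filter (fun r => Nat.Coprime r d) with hUd
  have hiii : n.totient = ∑ r ∈ Ud, F r := by
    have ht : n.totient = ((Finset.range n).filter (fun j => Nat.Coprime j n)).card := by
      rw [Nat.totient_eq_card_coprime]
      congr 1
      ext j
      simp [Nat.coprime_comm]
    rw [ht]
    have := Finset.card_eq_sum_card_fiberwise (s := (Finset.range n).filter
        (fun j => Nat.Coprime j n)) (t := Ud) (f := fun j => j % d) ?_
    · rw [this]
      apply Finset.sum_congr rfl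
      intro r _
      congr 1
      ext j
      simp only [Finset.mem_filter, Finset.mem_range]
      tauto
    · intro j hj
      simp only [Finset.mem_coe, Finset.mem_filter, Finset.mem_range] at hj
      simp only [hUd, Finset.mem_coe, Finset.mem_filter, Finset.mem_range]
      exact ⟨Nat.mod_lt _ hd0, hcop_dn j hj.2⟩
  -- (iv)
  have hiv : d.totient = Ud.card := by
    rw [Nat.totient_eq_card_coprime]
    congr 1
    ext j
    simp [hUd, Nat.coprime_comm]
  -- constancy of F on Ud
  have hFU : ∀ r ∈ Ud, F r = c := by
    intro r hr
    simp only [hUd, Finset.mem_filter, Finset.mem_range] at hr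
    exact hFconst r (1 % d) hr.1 h1d hr.2 h1cop
  have hFS : ∀ r ∈ Sd, F r = c := by
    intro r hr
    apply hFU
    simp only [hSd, Finset.mem_filter, Finset.mem_range] at hr
    simp only [hUd, Finset.mem_filter, Finset.mem_range]
    exact ⟨hr.1, hr.2.1⟩
  have h5 : ((Finset.range n).filter (fun j => Nat.Coprime j n ∧ A j)).card
      = Sd.card * c := by
    rw [hi, Finset.sum_congr rfl (fun r hr => (hi2 r hr).trans (hFS r hr)),
      Finset.sum_const, smul_eq_mul]
  have h6 : n.totient = d.totient * c := by
    rw [hiii, Finset.sum_congr rfl hFU, Finset.sum_const, smul_eq_mul, ← hiv]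
  rw [h5, h6]
  ring

private lemma count_pow {G : Type} [Group G] [Fintype G] (α : G)
    (hα : ∀ x : G, x ∈ Subgroup.zpowers α) (Pr : G → Prop) :
    {x : G | Pr x}.ncard
      = ((Finset.range (orderOf α)).filter (fun k => Pr (α ^ k))).card := by
  classical
  rw [Set.ncard_eq_toFinset_card', Set.toFinset_setOf]
  symm
  apply Finset.card_bij (i := fun k _ => α ^ k)
  · intro k hk
    simp only [Finset.mem_filter, Finset.mem_range, Finset.mem_univ, true_and] at hk ⊢
    exact hk.2
  · intro k hk k' hk' hkk'
    simp only [Finset.mem_filter, Finset.mem_range] at hk hk'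
    rw [pow_eq_pow_iff_modEq] at hkk'
    rwa [Nat.ModEq, Nat.mod_eq_of_lt hk.1, Nat.mod_eq_of_lt hk'.1] at hkk'
  · intro x hx
    simp only [Finset.mem_filter, Finset.mem_univ, true_and] at hx
    have hfin : IsOfFinOrder α := isOfFinOrder_iff_pow_eq_one.mpr
      ⟨Fintype.card G, Fintype.card_pos, pow_card_eq_one⟩
    obtain ⟨k, hk0⟩ := hfin.mem_powers_iff_mem_zpowers.mpr (hα x)
    have hk : α ^ k = x := hk0
    refine ⟨k % orderOf α, ?_, ?_⟩
    · simp only [Finset.mem_filter, Finset.mem_range]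
      constructor
      · exact Nat.mod_lt _ (orderOf_pos α)
      · show Pr (α ^ (k % orderOf α))
        rw [pow_mod_orderOf, hk]; exact hx
    · show α ^ (k % orderOf α) = x
      rw [pow_mod_orderOf, hk]


private lemma chainP (Q N e : ℕ) (hQ0 : 0 < Q) (hN0 : 0 < N) (he0 : 0 < e) (hQN : Q ∣ N)
    (he : Nat.Coprime e Q) (S : ℕ → Prop)
    (hS : ∀ a b, a ≡ b [MOD Q] → (S a ↔ S b)) :
    ((Finset.range (N * e)).filter (fun k => (N * e).gcd k = e ∧ S k)).card
      = ((Finset.range N).filter (fun j => Nat.Coprime j N ∧ S j)).card :=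
  (P_reindex N e hN0 he0 S).trans (Zp_eq_Pp Q N e hQ0 hN0 hQN he S hS).symm


/-- relation between `Z_{q,m,N}(0)` and `P_{q,m,N}(0)` when `DQ ∣ N`. -/
theorem stmt_17 (p s m q Q D N : ℕ) [Fact p.Prime] (hs : 0 < s) (hm : 0 < m)
    (hq : q = p ^ s) (hQ : Q = (q ^ m - 1) / (q - 1))
    (K L : Type) [Field K] [Fintype K] [Field L] [Fintype L] [Algebra K L]
    (hK : Fintype.card K = q) (hL : Fintype.card L = q ^ m)
    (α : Lˣ) (hα : ∀ x : Lˣ, x ∈ Subgroup.zpowers α)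
    (hD0 : 0 < D) (hD1 : D ∣ q - 1) (hD2 : Nat.Coprime ((q - 1) / D) Q)
    (hDmin : ∀ D' : ℕ, 0 < D' → D' ∣ q - 1 → Nat.Coprime ((q - 1) / D') Q → D ≤ D')
    (hN : N ∣ q ^ m - 1) (hDQN : D * Q ∣ N) :
    Zcount K L α N (0 : K) = ((q ^ m - 1) / N) * Pcount K L N (0 : K) ∧
    (Pcount K L (q ^ m - 1) (0 : K) : ℚ) =
      ((Nat.totient (q ^ m - 1) : ℚ) / (Nat.totient (D * Q) : ℚ)) *
        (Pcount K L (D * Q) (0 : K) : ℚ) := by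
  classical
  have hp2 : 2 ≤ p := (Fact.out : p.Prime).two_le
  have hq2 : 1 < q := by rw [hq]; exact Nat.one_lt_pow hs.ne' hp2
  set M : ℕ := q ^ m - 1 with hM
  have hqm1 : 1 < q ^ m := Nat.one_lt_pow hm.ne' hq2
  have hM0 : 0 < M := by omega
  have hq10 : 0 < q - 1 := by omega
  have hdvd : (q - 1) ∣ M := by
    have h := Nat.sub_dvd_pow_sub_pow q 1 m
    simpa using h
  have hQM : Q * (q - 1) = M := by rw [hQ]; exact Nat.div_mul_cancel hdvd
  have hQ0 : 0 < Q := by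
    rcases Nat.eq_zero_or_pos Q with h | h
    · rw [h, zero_mul] at hQM; omega
    · exact h
  have hQdvdM : Q ∣ M := ⟨q - 1, hQM.symm⟩
  have hcardLu : Fintype.card Lˣ = M := by rw [Fintype.card_units, hL]
  have hordα : orderOf α = M := by
    rw [orderOf_eq_card_of_forall_mem_zpowers hα, Nat.card_eq_fintype_card, hcardLu]
  have hN0 : 0 < N := Nat.pos_of_dvd_of_pos hN hM0
  have hDQ0 : 0 < D * Q := Nat.mul_pos hD0 hQ0
  have hQdvdN : Q ∣ N := dvd_trans (dvd_mul_left Q D) hDQN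
  have hDQM : D * Q ∣ M := dvd_trans hDQN hN
  have hfinα : IsOfFinOrder α := isOfFinOrder_iff_pow_eq_one.mpr
    ⟨Fintype.card Lˣ, Fintype.card_pos, pow_card_eq_one⟩
  -- the subfield generator b
  have hcardKu : Fintype.card Kˣ = q - 1 := by rw [Fintype.card_units, hK]
  have hordQ : orderOf (α ^ Q) = q - 1 := by
    rw [orderOf_pow, hordα, Nat.gcd_comm, Nat.gcd_eq_left hQdvdM, ← hQM,
      Nat.mul_div_cancel_left _ hQ0]
  have hinj : Function.Injective (Units.map (algebraMap K L : K →* L)) :=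
    Units.map_injective (algebraMap K L).injective
  have hbex : ∃ b : Kˣ, Units.map (algebraMap K L : K →* L) b = α ^ Q := by
    set I : Finset Lˣ := Finset.univ.image
      (fun b : Kˣ => Units.map (algebraMap K L : K →* L) b) with hI
    set R : Finset Lˣ := Finset.univ.filter (fun x : Lˣ => x ^ (q - 1) = 1) with hR
    have hIR : I ⊆ R := by
      intro x hx
      simp only [hI, Finset.mem_image, Finset.mem_univ, true_and] at hx
      obtain ⟨b, rfl⟩ := hx
      simp only [hR, Finset.mem_filter, Finset.mem_univ, true_and]
      rw [← map_pow]
      have hb1 : b ^ (q - 1) = 1 := by rw [← hcardKu]; exact pow_card_eq_one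
      rw [hb1, map_one]
    have hcardI : I.card = q - 1 := by
      rw [hI, Finset.card_image_of_injective _ hinj, Finset.card_univ, hcardKu]
    have hRsub : R ⊆ (Finset.range (q - 1)).image (fun t => (α ^ Q) ^ t) := by
      intro x hx
      simp only [hR, Finset.mem_filter, Finset.mem_univ, true_and] at hx
      obtain ⟨n, hn0⟩ := hfinα.mem_powers_iff_mem_zpowers.mpr (hα x)
      have hn : α ^ n = x := hn0
      have hdvd2 : M ∣ n * (q - 1) := by
        rw [← hordα]
        apply orderOf_dvd_of_pow_eq_one
        rw [pow_mul, hn, hx]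
      have hQn : Q ∣ n := by
        obtain ⟨c, hc⟩ := hdvd2
        refine ⟨c, ?_⟩
        have h2 : n * (q - 1) = (Q * c) * (q - 1) := by rw [hc, ← hQM]; ring
        exact Nat.eq_of_mul_eq_mul_right hq10 h2
      obtain ⟨n', rfl⟩ := hQn
      simp only [Finset.mem_image, Finset.mem_range]
      refine ⟨n' % (q - 1), Nat.mod_lt _ hq10, ?_⟩
      have hpm := pow_mod_orderOf (α ^ Q) n'
      rw [hordQ] at hpm
      rw [hpm, ← pow_mul]
      exact hn
    have hcardR : R.card ≤ q - 1 := le_trans (Finset.card_le_card hRsub)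
      (le_trans Finset.card_image_le (le_of_eq (Finset.card_range _)))
    have hIRe : I = R := Finset.eq_of_subset_of_card_le hIR (by rw [hcardI]; exact hcardR)
    have hmem : α ^ Q ∈ R := by
      simp only [hR, Finset.mem_filter, Finset.mem_univ, true_and]
      rw [← pow_mul, hQM, ← hordα]
      exact pow_orderOf_eq_one α
    rw [← hIRe] at hmem
    simp only [hI, Finset.mem_image, Finset.mem_univ, true_and] at hmem
    exact hmem
  obtain ⟨b, hb⟩ := hbex
  have hbL : algebraMap K L (b : K) = ((α ^ Q : Lˣ) : L) := by
    rw [← hb]; rfl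
  -- trace invariance
  set S : ℕ → Prop := fun k => Algebra.trace K L ((α ^ k : Lˣ) : L) = 0 with hSdef
  have hstep : ∀ k : ℕ, S (k + Q) ↔ S k := by
    intro k
    have hx : ((α ^ (k + Q) : Lˣ) : L) = (b : K) • ((α ^ k : Lˣ) : L) := by
      rw [pow_add, Units.val_mul, Algebra.smul_def, hbL]
      ring
    simp only [hSdef]
    rw [hx, map_smul, smul_eq_mul, mul_eq_zero]
    simp [Units.ne_zero b]
  have hper : ∀ r t : ℕ, S (r + Q * t) ↔ S r := by
    intro r t
    induction t with
    | zero => simp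
    | succ t ih =>
      have h2 : r + Q * (t + 1) = (r + Q * t) + Q := by ring
      rw [h2, hstep, ih]
  have hSmod : ∀ a b' : ℕ, a ≡ b' [MOD Q] → (S a ↔ S b') := by
    intro a b' hab
    have h1 := hper (a % Q) (a / Q)
    rw [Nat.mod_add_div] at h1
    have h2 := hper (b' % Q) (b' / Q)
    rw [Nat.mod_add_div] at h2
    rw [h1, h2]
    unfold Nat.ModEq at hab
    rw [hab]
  -- key : Pcount as a coprime count
  have key : ∀ N' : ℕ, N' ∣ M → D * Q ∣ N' →
      Pcount K L N' 0 = ((Finset.range N').filter (fun j => Nat.Coprime j N' ∧ S j)).card := by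
    intro N' hN'M hDQN'
    have hN'0 : 0 < N' := Nat.pos_of_dvd_of_pos hN'M hM0
    set e := M / N' with he
    have heN : N' * e = M := Nat.mul_div_cancel' hN'M
    have he0 : 0 < e := Nat.div_pos (Nat.le_of_dvd hM0 hN'M) hN'0
    have hQN' : Q ∣ N' := dvd_trans (dvd_mul_left Q D) hDQN'
    have hecop : Nat.Coprime e Q := by
      obtain ⟨k, hk⟩ := hDQN'
      have h1 : Q * (D * k * e) = Q * (q - 1) := by
        rw [hQM, ← heN, hk]; ring
      have h2 : D * k * e = q - 1 := Nat.eq_of_mul_eq_mul_left hQ0 h1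
      have h3 : e ∣ (q - 1) / D := by
        refine ⟨k, ?_⟩
        have h4 : q - 1 = D * (e * k) := by rw [← h2]; ring
        rw [h4, Nat.mul_div_cancel_left _ hD0]
      exact Nat.Coprime.coprime_dvd_left h3 hD2
    have horder : ∀ k : ℕ, orderOf (α ^ k) = N' ↔ (N' * e).gcd k = e := by
      intro k
      rw [orderOf_pow, hordα, ← heN]
      constructor
      · intro h
        have hgd : (N' * e).gcd k ∣ N' * e := Nat.gcd_dvd_left _ _
        have h2 : (N' * e).gcd k * N' = e * N' := by
          conv_rhs => rw [mul_comm e N', ← Nat.mul_div_cancel' hgd, h]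
        exact Nat.eq_of_mul_eq_mul_right hN'0 h2
      · intro h
        rw [h]
        exact Nat.mul_div_cancel _ he0
    have hPc : Pcount K L N' 0
        = ((Finset.range (N' * e)).filter (fun k => (N' * e).gcd k = e ∧ S k)).card := by
      unfold Pcount
      rw [count_pow α hα, hordα, ← heN]
      congr 1
      ext k
      simp only [Finset.mem_filter, Finset.mem_range]
      exact and_congr Iff.rfl (and_congr (horder k) Iff.rfl)
    rw [hPc, chainP Q N' e hQ0 hN'0 he0 hQN' hecop S hSmod]
  -- IsNFree characterization
  have hNfree : ∀ k : ℕ, IsNFree α (α ^ k) N ↔ Nat.Coprime k N := by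
    intro k
    constructor
    · rintro ⟨k', hk', heq⟩
      have h1 : k ≡ k' [MOD M] := by rw [← hordα]; exact pow_eq_pow_iff_modEq.mp heq
      exact (cop_modEq (Nat.ModEq.of_dvd hN h1)).mpr hk'
    · intro h; exact ⟨k, h, rfl⟩
  set e := M / N with he
  have heN : N * e = M := Nat.mul_div_cancel' hN
  have hZcount : Zcount K L α N 0
      = ((Finset.range (N * e)).filter (fun k => Nat.Coprime k N ∧ S k)).card := by
    unfold Zcount
    rw [count_pow α hα, hordα, ← heN]
    congr 1
    ext k
    simp only [Finset.mem_filter, Finset.mem_range]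
    exact and_congr Iff.rfl (and_congr (hNfree k) Iff.rfl)
  constructor
  · show Zcount K L α N 0 = e * Pcount K L N 0
    rw [hZcount, Z_fiber Q N e hN0 hQdvdN S hSmod, key N hN hDQN]
  · have h1 := key M dvd_rfl hDQM
    have h2 := key (D * Q) hDQM dvd_rfl
    have hSDQ : ∀ a b' : ℕ, a ≡ b' [MOD D * Q] → (S a ↔ S b') := fun a b' h =>
      hSmod a b' (h.of_dvd (dvd_mul_left Q D))
    have hnat : Pcount K L M 0 * (D * Q).totient
        = M.totient * Pcount K L (D * Q) 0 := by
      rw [h1, h2]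
      exact fiber_count M (D * Q) hDQM hM0 hDQ0 S hSDQ
    have hphi : ((D * Q).totient : ℚ) ≠ 0 := by
      exact_mod_cast (Nat.totient_pos.mpr hDQ0).ne'
    rw [div_mul_eq_mul_div, eq_div_iff hphi]
    exact_mod_cast hnat
end

section
/- Let p be a Mersenne prime and Q = (p^4 - 1)/(p - 1) = (p + 1)(p^2 + 1). Then the number of elements of F_{p^4}^* with multiplicative order exactly 2Q and absolute trace Tr_{F_{p^4}/F_p} equal to 0 is φ(2Q)/(p + 1) = 2·φ(p^2 + 1). -/
open scoped BigOperators
open scoped Classical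

lemma trace_zero_iff' (p : ℕ) [Fact p.Prime] (K L : Type) [Field K] [Fintype K] [Field L] [Fintype L]
    [Algebra K L] (hK : Fintype.card K = p) (hL : Fintype.card L = p ^ 4) (x : L) :
    Algebra.trace K L x = 0 ↔ x + x ^ p + x ^ p ^ 2 + x ^ p ^ 3 = 0 := by
  have hp : p.Prime := Fact.out
  haveI : CharP K p := charP_of_card_eq_prime (R := K) hK
  haveI : CharP L p := charP_of_injective_algebraMap' K (A := L) p
  haveI : FiniteDimensional K L := Module.Finite.of_finite (R := K) (M := L)
  have hfr : Module.finrank K L = 4 := by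
    have h : Fintype.card L = Fintype.card K ^ Module.finrank K L := Module.card_eq_pow_finrank
    rw [hK, hL] at h
    exact (Nat.pow_right_injective hp.two_le h.symm)
  let φhom : L →ₐ[K] L :=
    { toRingHom := frobenius L p
      commutes' := fun c => by
        show (algebraMap K L c) ^ p = algebraMap K L c
        rw [← map_pow]
        congr 1
        rw [← hK]
        exact FiniteField.pow_card c }
  have hbij : Function.Bijective φhom :=
    Finite.injective_iff_bijective.mp (frobenius L p).injective
  let φ : L ≃ₐ[K] L := AlgEquiv.ofBijective φhom hbij
  have hφx : ∀ (y : L), φ y = y ^ p := fun y => rfl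
  have hφpow : ∀ (i : ℕ) (y : L), (φ ^ i) y = y ^ p ^ i := by
    intro i
    induction i with
    | zero => intro y; simp
    | succ n ih =>
      intro y
      rw [pow_succ, AlgEquiv.mul_apply, hφx, ih, ← pow_mul, pow_succ']
  have hφ4 : φ ^ 4 = 1 := by
    ext y
    rw [hφpow, AlgEquiv.one_apply, ← hL]
    exact FiniteField.pow_card y
  have hφ2 : φ ^ 2 ≠ 1 := by
    intro h
    obtain ⟨g, hg⟩ := IsCyclic.exists_generator (α := Lˣ)
    have hgord : orderOf g = p ^ 4 - 1 := by
      rw [orderOf_eq_card_of_forall_mem_zpowers hg]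
      rw [Nat.card_eq_fintype_card, Fintype.card_units, hL]
    have hx2 : ((g : L)) ^ p ^ 2 = (g : L) := by
      have h1 : (φ ^ 2) (g : L) = (1 : L ≃ₐ[K] L) (g : L) := by rw [h]
      rw [hφpow, AlgEquiv.one_apply] at h1
      exact h1
    have hunit : g ^ (p ^ 2) = g := Units.ext (by rw [Units.val_pow_eq_pow_val]; exact hx2)
    have hone : g ^ (p ^ 2 - 1) = 1 := by
      have h1 : g ^ (p ^ 2 - 1) * g = 1 * g := by
        rw [← pow_succ, one_mul]
        have h2 : p ^ 2 - 1 + 1 = p ^ 2 := Nat.succ_pred_eq_of_pos (pow_pos hp.pos 2)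
        rw [h2, hunit]
      exact mul_right_cancel h1
    have hdvd : orderOf g ∣ p ^ 2 - 1 := orderOf_dvd_of_pow_eq_one hone
    rw [hgord] at hdvd
    have hp2 : 2 ≤ p := hp.two_le
    have h24 : p ^ 2 < p ^ 4 := Nat.pow_lt_pow_right (by omega) (by omega)
    have h21 : 4 ≤ p ^ 2 := by
      calc (4:ℕ) = 2 ^ 2 := rfl
      _ ≤ p ^ 2 := Nat.pow_le_pow_left hp2 2
    have := Nat.le_of_dvd (by omega) hdvd
    omega
  have hord : orderOf φ = 4 := by
    have : orderOf φ = 2 ^ 2 := orderOf_eq_prime_pow (n := 1) (by simpa using hφ2) (by simpa using hφ4)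
    simpa using this
  have hinj : Set.InjOn (fun i : ℕ => φ ^ i) (Finset.range 4 : Finset ℕ) := by
    intro i hi j hj hij
    have h := pow_injOn_Iio_orderOf (x := φ)
    rw [hord] at h
    exact h (by simpa using hi) (by simpa using hj) hij
  have himg : (Finset.range 4).image (fun i => φ ^ i) = Finset.univ := by
    apply Finset.eq_univ_of_card
    rw [Finset.card_image_of_injOn hinj, Finset.card_range]
    rw [Fintype.card_eq_nat_card, IsGalois.card_aut_eq_finrank, hfr]
  have hsum : ∑ σ : L ≃ₐ[K] L, σ x = x + x ^ p + x ^ p ^ 2 + x ^ p ^ 3 := by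
    rw [← himg, Finset.sum_image hinj]
    rw [Finset.sum_congr rfl (fun i _ => hφpow i x)]
    rw [Finset.sum_range_succ, Finset.sum_range_succ, Finset.sum_range_succ, Finset.sum_range_one]
    simp [pow_one]
  have htr := trace_eq_sum_automorphisms (K := K) x
  rw [hsum] at htr
  constructor
  · intro h; rw [h, map_zero] at htr; exact htr.symm
  · intro h
    rw [h] at htr
    exact (map_eq_zero_iff (algebraMap K L) (algebraMap K L).injective).mp htr

/-- `orderOf ζ = 2^(m+4)` iff `ζ^(2^(m+3)) = -1`, in the units of a finite field of odd
characteristic whose unit group has 2-part exactly `2^(m+4)`. -/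
lemma key_iff (p m u : ℕ) [Fact p.Prime] (K L : Type) [Field K] [Fintype K] [Field L] [Fintype L]
    [Algebra K L] (hK : Fintype.card K = p) (hL : Fintype.card L = p ^ 4)
    (hp1 : p + 1 = 2 ^ (m + 2)) (hu2 : p ^ 2 + 1 = 2 * u) (hu1 : 1 < u) (huodd : u % 2 = 1)
    (ζ ω : Lˣ) (hζE : (ζ : L) ^ 2 ^ (m + 4) = 1) (hζhalf : (ζ : L) ^ 2 ^ (m + 3) = -1)
    (hω : orderOf ω = u) :
    Algebra.trace K L ((ζ : L) * (ω : L)) = 0 ↔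
      (ζ : L) ^ (p - 1) * ((ω : L) - (ω : L)⁻¹) ^ (p - 1) = -1 := by
  have hp : p.Prime := Fact.out
  haveI : CharP K p := charP_of_card_eq_prime (R := K) hK
  haveI : CharP L p := charP_of_injective_algebraMap' K (A := L) p
  have h2m : (1:ℕ) ≤ 2 ^ m := Nat.one_le_two_pow
  have hpow42 : (2:ℕ) ^ (m+2) = 4 * 2 ^ m := by ring
  have hp3 : 3 ≤ p := by omega
  -- ω ^ (p^2) = ω⁻¹ at the level of L
  have hωpow : (ω : L) ^ (p ^ 2) = (ω : L)⁻¹ := by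
    have h1 : ω ^ (p ^ 2 + 1) = 1 := by
      rw [hu2, mul_comm, pow_mul, ← hω, pow_orderOf_eq_one, one_pow]
    have h2 : (ω : L) ^ (p ^ 2) * (ω : L) = 1 := by
      have := congrArg (Units.val) h1
      rw [Units.val_pow_eq_pow_val, Units.val_one] at this
      rw [← pow_succ, this]
    exact eq_inv_of_mul_eq_one_left h2
  -- ζ ^ (p^2) = -ζ
  have hA : p ^ 2 + 2 ^ (m + 3) = 2 ^ (2 * m + 4) + 1 := by
    have h1 : (2:ℕ) ^ (m + 3) = 2 * 2 ^ (m + 2) := by ring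
    have h2 : (2:ℕ) ^ (2 * m + 4) = 2 ^ (m + 2) * 2 ^ (m + 2) := by ring
    rw [h1, h2, ← hp1]; ring
  have hζpow : (ζ : L) ^ (p ^ 2) = -(ζ : L) := by
    have h1 : (ζ : L) ^ (p ^ 2) * (ζ : L) ^ (2 ^ (m + 3)) = (ζ : L) := by
      rw [← pow_add, hA, pow_add, pow_one]
      have h2 : (2:ℕ) ^ (2 * m + 4) = 2 ^ (m + 4) * 2 ^ m := by ring
      rw [h2, pow_mul, hζE, one_pow, one_mul]
    rw [hζhalf, mul_neg_one] at h1
    linear_combination -h1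
  -- abbreviations
  set x : L := (ζ : L) * (ω : L) with hxdef
  set s : L := (ω : L) - (ω : L)⁻¹ with hsdef
  have hs0 : s ≠ 0 := by
    intro h
    have h1 : (ω : L) = (ω : L)⁻¹ := by rwa [hsdef, sub_eq_zero] at h
    have h2 : (ω : L) * (ω : L) = 1 := by
      nth_rewrite 2 [h1]
      exact mul_inv_cancel₀ (Units.ne_zero ω)
    have h3 : ω * ω = 1 := Units.ext (by rw [Units.val_mul, h2, Units.val_one])
    have h4 : orderOf ω ∣ 2 := orderOf_dvd_of_pow_eq_one (by rw [pow_two]; exact h3)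
    rw [hω] at h4
    have := Nat.le_of_dvd (by omega) h4
    omega
  have ht : x + x ^ p ^ 2 = (ζ : L) * s := by
    rw [hxdef, mul_pow, hζpow, hωpow, hsdef]
    ring
  rw [trace_zero_iff' p K L hK hL]
  -- rewrite the four-term sum as t + t^p with t = ζ * s
  have hsum : x + x ^ p + x ^ p ^ 2 + x ^ p ^ 3 = (ζ : L) * s + ((ζ : L) * s) ^ p := by
    have h1 : ((ζ : L) * s) ^ p = x ^ p + x ^ p ^ 3 := by
      rw [← ht, add_pow_char, ← pow_mul]
      have : p ^ 2 * p = p ^ 3 := by ring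
      rw [this]
    rw [h1, ← ht]
    ring
  rw [hsum]
  -- now factor
  have hps : p = (p - 1) + 1 := by omega
  have hfac : (ζ : L) * s + ((ζ : L) * s) ^ p
      = ((ζ : L) * s) * (1 + (ζ : L) ^ (p - 1) * s ^ (p - 1)) := by
    conv_lhs => rw [hps]
    rw [mul_pow, pow_succ, pow_succ]
    ring
  rw [hfac]
  have hζ0 : (ζ : L) ≠ 0 := Units.ne_zero ζ
  constructor
  · intro h
    rcases mul_eq_zero.mp h with h' | h'
    · rcases mul_eq_zero.mp h' with h'' | h''
      · exact absurd h'' hζ0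
      · exact absurd h'' hs0
    · linear_combination h'
  · intro h
    rw [h]
    ring


theorem stmt_19' (p : ℕ) [Fact p.Prime] (hmer : ∃ ℓ : ℕ, ℓ.Prime ∧ p = 2 ^ ℓ - 1)
    (K L : Type) [Field K] [Fintype K] [Field L] [Fintype L] [Algebra K L]
    (hK : Fintype.card K = p) (hL : Fintype.card L = p ^ 4) :
    ({ξ : Lˣ | orderOf ξ = 2 * ((p + 1) * (p ^ 2 + 1)) ∧ Algebra.trace K L (ξ : L) = 0}.ncard : ℚ) =
      (Nat.totient (2 * ((p + 1) * (p ^ 2 + 1))) : ℚ) / ((p : ℚ) + 1) ∧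
    {ξ : Lˣ | orderOf ξ = 2 * ((p + 1) * (p ^ 2 + 1)) ∧ Algebra.trace K L (ξ : L) = 0}.ncard
      = 2 * Nat.totient (p ^ 2 + 1) := by
  obtain ⟨ℓ, hℓ, hpℓ⟩ := hmer
  obtain ⟨m, rfl⟩ : ∃ m, ℓ = m + 2 := ⟨ℓ - 2, by have := hℓ.two_le; omega⟩
  have hp : p.Prime := Fact.out
  have h2m : (1:ℕ) ≤ 2 ^ m := Nat.one_le_two_pow
  have hpow42 : (2:ℕ) ^ (m+2) = 4 * 2 ^ m := by ring
  have h2pos : (1:ℕ) ≤ 2 ^ (m+2) := Nat.one_le_two_pow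
  have hp1 : p + 1 = 2 ^ (m + 2) := by omega
  have hp3 : 3 ≤ p := by omega
  haveI : CharP K p := charP_of_card_eq_prime (R := K) hK
  haveI : CharP L p := charP_of_injective_algebraMap' K (A := L) p
  haveI : Fact (Nat.Prime 2) := ⟨Nat.prime_two⟩
  -- basic arithmetic
  obtain ⟨v, hv⟩ : ∃ v, v + 1 = 2 * 2 ^ m := ⟨2 * 2 ^ m - 1, by omega⟩
  have hpv : p = 2 * v + 1 := by omega
  have hvodd : v % 2 = 1 := by omega
  have hv1 : 1 ≤ v := by omega
  set u : ℕ := 2 * v ^ 2 + 2 * v + 1 with hudef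
  have hu2 : p ^ 2 + 1 = 2 * u := by rw [hpv, hudef]; ring
  have hvsq : 1 ≤ v ^ 2 := Nat.one_le_pow _ _ (by omega)
  have hu1 : 1 < u := by rw [hudef]; omega
  have huodd : u % 2 = 1 := by rw [hudef]; omega
  set E : ℕ := 2 ^ (m + 4) with hEdef
  have hE2 : E = 2 * 2 ^ (m + 3) := by rw [hEdef]; ring
  have hE1 : 1 < E := by have : (1:ℕ) ≤ 2 ^ (m+3) := Nat.one_le_two_pow; omega
  have hN : 2 * ((p + 1) * (p ^ 2 + 1)) = E * u := by rw [hp1, hu2, hEdef]; ring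
  have hE8 : E = 8 * (v + 1) := by rw [hEdef, hv]; ring
  have hp4 : p ^ 4 = E * (v * u) + 1 := by rw [hE8, hpv, hudef]; ring
  have hcardU : Fintype.card Lˣ = E * (v * u) := by
    rw [Fintype.card_units, hL, hp4]
    omega
  -- -1 ≠ 1
  have hm1L : (-1 : L) ≠ 1 := by
    intro h
    have h2 : (2 : L) = 0 := by linear_combination -h
    have h3 : (p : ℕ) ∣ 2 := by
      have := (CharP.cast_eq_zero_iff L p 2).mp (by exact_mod_cast h2)
      exact this
    have := Nat.le_of_dvd (by omega) h3
    omega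
  have hm1U : (-1 : Lˣ) ≠ 1 := by
    intro h
    apply hm1L
    have := congrArg Units.val h
    simpa using this
  -- order E ↔ half-power is -1
  have hEiff : ∀ ζ : Lˣ, orderOf ζ = E ↔ ζ ^ 2 ^ (m + 3) = -1 := by
    intro ζ
    constructor
    · intro hord
      have h1 : (ζ ^ 2 ^ (m + 3)) ^ 2 = 1 := by
        rw [← pow_mul, show 2 ^ (m+3) * 2 = E from by rw [hEdef]; ring, ← hord,
          pow_orderOf_eq_one]
      have h2 : ζ ^ 2 ^ (m + 3) ≠ 1 := by
        intro h
        have h3 := orderOf_dvd_of_pow_eq_one h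
        rw [hord] at h3
        have h4 := Nat.le_of_dvd (Nat.pow_pos (by omega)) h3
        have h5 : (2:ℕ) ^ (m+3) < E := by rw [hE2]; have : (1:ℕ) ≤ 2^(m+3) := Nat.one_le_two_pow; omega
        omega
      have h6 : ((ζ ^ 2 ^ (m+3) : Lˣ) : L) = 1 ∨ ((ζ ^ 2 ^ (m+3) : Lˣ) : L) = -1 := by
        apply mul_self_eq_one_iff.mp
        have := congrArg Units.val h1
        rw [Units.val_pow_eq_pow_val, pow_two] at this
        simpa using this
      rcases h6 with h | h
      · exact absurd (Units.ext (by simpa using h)) h2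
      · exact Units.ext (by simpa using h)
    · intro hhalf
      rw [hEdef, show m + 4 = (m + 3) + 1 from rfl]
      refine orderOf_eq_prime_pow ?_ ?_
      · rw [hhalf]; exact hm1U
      · rw [pow_succ, pow_mul, hhalf]
        simp
  -- Bezout data
  have hcop : Nat.Coprime E u := by
    rw [hEdef]
    exact Nat.Coprime.pow_left _ ((Nat.prime_two.coprime_iff_not_dvd).mpr (by omega))
  obtain ⟨a, -, ha⟩ := Nat.exists_mul_mod_eq_one_of_coprime hcop hu1
  obtain ⟨b, -, hb⟩ := Nat.exists_mul_mod_eq_one_of_coprime hcop.symm hE1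
  have hEa_mod : E * a ≡ 1 [MOD u] := by
    unfold Nat.ModEq; rw [ha, Nat.mod_eq_of_lt hu1]
  have hub_mod : u * b ≡ 1 [MOD E] := by
    unfold Nat.ModEq; rw [hb, Nat.mod_eq_of_lt hE1]
  have hau : Nat.Coprime (E * a) u := by
    unfold Nat.Coprime
    rw [Nat.gcd_comm, Nat.gcd_rec, ha, Nat.gcd_one_left]
  have hbE : Nat.Coprime (u * b) E := by
    unfold Nat.Coprime
    rw [Nat.gcd_comm, Nat.gcd_rec, hb, Nat.gcd_one_left]
  have ha_u : Nat.Coprime a u := Nat.Coprime.coprime_dvd_left (dvd_mul_left a E) hau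
  have hb_E : Nat.Coprime b E := Nat.Coprime.coprime_dvd_left (dvd_mul_left b u) hbE
  -- the sets
  set S : Finset Lˣ := Finset.univ.filter
    (fun ξ : Lˣ => orderOf ξ = 2 * ((p + 1) * (p ^ 2 + 1)) ∧ Algebra.trace K L (ξ : L) = 0)
    with hSdef
  set B : Finset Lˣ := Finset.univ.filter (fun ω : Lˣ => orderOf ω = u) with hBdef
  have hBcard : B.card = Nat.totient u := by
    rw [hBdef]
    exact IsCyclic.card_orderOf_eq_totient (by rw [hcardU]; exact ⟨E * v, by ring⟩)
  have hncard : {ξ : Lˣ | orderOf ξ = 2 * ((p + 1) * (p ^ 2 + 1)) ∧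
      Algebra.trace K L (ξ : L) = 0}.ncard = S.card := by
    rw [Set.ncard_eq_toFinset_card', hSdef]
    congr 1
    ext ξ
    simp
  -- fiberwise count
  have hmaps : ∀ ξ ∈ S, ξ ^ (E * a) ∈ B := by
    intro ξ hξ
    rw [hSdef, Finset.mem_filter] at hξ
    obtain ⟨-, hord, -⟩ := hξ
    rw [hBdef, Finset.mem_filter]
    refine ⟨Finset.mem_univ _, ?_⟩
    have hgcd : Nat.gcd (E * u) (E * a) = E := by
      rw [Nat.gcd_mul_left, Nat.Coprime.gcd_eq_one ha_u.symm, mul_one]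
    rw [orderOf_pow, hord, hN, hgcd, Nat.mul_div_cancel_left u (by omega : 0 < E)]
  have hsplit := Finset.card_eq_sum_card_fiberwise hmaps
  -- the fiber over each ω has exactly two elements
  have hfiber : ∀ ω ∈ B, (S.filter (fun ξ => ξ ^ (E * a) = ω)).card = 2 := by
    intro ω hωB
    rw [hBdef, Finset.mem_filter] at hωB
    have hω : orderOf ω = u := hωB.2
    set s : L := (ω : L) - (ω : L)⁻¹ with hsdef
    have hs0 : s ≠ 0 := by
      intro h
      have h1 : (ω : L) = (ω : L)⁻¹ := by rwa [hsdef, sub_eq_zero] at h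
      have h2 : (ω : L) * (ω : L) = 1 := by
        nth_rewrite 2 [h1]
        exact mul_inv_cancel₀ (Units.ne_zero ω)
      have h3 : orderOf ω ∣ 2 := orderOf_dvd_of_pow_eq_one
        (Units.ext (by rw [Units.val_pow_eq_pow_val, pow_two, h2, Units.val_one]))
      rw [hω] at h3
      have := Nat.le_of_dvd (by omega) h3
      omega
    -- s ^ (p^2) = -s
    have hωpow : (ω : L) ^ (p ^ 2) = (ω : L)⁻¹ := by
      have h1 : ω ^ (p ^ 2 + 1) = 1 := by
        rw [hu2, mul_comm, pow_mul, ← hω, pow_orderOf_eq_one, one_pow]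
      have h2 : (ω : L) ^ (p ^ 2) * (ω : L) = 1 := by
        have := congrArg (Units.val) h1
        rw [Units.val_pow_eq_pow_val, Units.val_one] at this
        rw [← pow_succ, this]
      exact eq_inv_of_mul_eq_one_left h2
    have hsp2 : s ^ p ^ 2 = -s := by
      rw [hsdef, sub_pow_char_pow, hωpow, inv_pow, hωpow, inv_inv, neg_sub]
    set su : Lˣ := Units.mk0 s hs0 with hsudef
    have hsuval : (su : L) = s := rfl
    have hsu_p2 : su ^ p ^ 2 = -su :=
      Units.ext (by rw [Units.val_pow_eq_pow_val, Units.val_neg, hsuval, hsp2])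
    have hp2pos : 1 ≤ p ^ 2 := Nat.one_le_pow _ _ (by omega)
    have hsu21 : su ^ (p ^ 2 - 1) = -1 := by
      have h1 : su ^ (p ^ 2 - 1) * su = -1 * su := by
        rw [← pow_succ, show p ^ 2 - 1 + 1 = p ^ 2 from by omega, hsu_p2, neg_one_mul]
      exact mul_right_cancel h1
    set bu : Lˣ := -(su ^ (p - 1))⁻¹ with hbudef
    have hbuval : (bu : L) = -(s ^ (p - 1))⁻¹ := by
      rw [hbudef, Units.val_neg, Units.val_inv_eq_inv_val, Units.val_pow_eq_pow_val, hsuval]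
    have hpm1 : p - 1 = 2 * v := by omega
    have hevp1 : Even (p + 1) := ⟨v + 1, by omega⟩
    have hevm1 : Even (p - 1) := ⟨v, by omega⟩
    have hsqm1 : (p - 1) * (p + 1) = p ^ 2 - 1 := by
      have h1 : p ^ 2 = 4 * v ^ 2 + 4 * v + 1 := by rw [hpv]; ring
      have h2 : (p - 1) * (p + 1) = 4 * v ^ 2 + 4 * v := by
        rw [hpm1, show p + 1 = 2 * v + 2 from by omega]; ring
      omega
    have hbu_p1 : bu ^ (p + 1) = -1 := by
      rw [hbudef, hevp1.neg_pow, inv_pow, ← pow_mul, hsqm1, hsu21]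
      simp
    have hbu_half : bu ^ 2 ^ (m + 2) = -1 := by rw [← hp1]; exact hbu_p1
    -- bu is a square
    have hring2 : ringChar L ≠ 2 := by
      rw [ringChar.eq L p]; omega
    have hcardhalf : Fintype.card L / 2 = 2 ^ (m + 3) * (v * u) := by
      have h1 : E * (v * u) = 2 * (2 ^ (m + 3) * (v * u)) := by rw [hE2]; ring
      rw [hL, hp4]
      omega
    have hbusq : IsSquare bu := by
      rw [FiniteField.unit_isSquare_iff hring2 bu, hcardhalf]
      have h1 : bu ^ (2 ^ (m + 3)) = 1 := by
        rw [show (2:ℕ) ^ (m + 3) = 2 ^ (m + 2) * 2 from by ring, pow_mul, hbu_half]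
        simp
      rw [pow_mul, h1, one_pow]
    obtain ⟨r, hr⟩ := hbusq
    have hr2 : r ^ 2 = bu := by rw [pow_two]; exact hr.symm
    have hr_half : r ^ 2 ^ (m + 3) = -1 := by
      rw [show (2:ℕ) ^ (m + 3) = 2 * 2 ^ (m + 2) from by ring, pow_mul, hr2, hbu_half]
    have hrord : orderOf r = E := (hEiff r).mpr hr_half
    have hrE : r ^ E = 1 := by rw [← hrord]; exact pow_orderOf_eq_one r
    -- choose c with v * c ≡ 1 mod 2^(m+3)
    have hcv : Nat.Coprime v (2 ^ (m + 3)) :=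
      Nat.Coprime.pow_right _ (Nat.coprime_comm.mp ((Nat.prime_two.coprime_iff_not_dvd).mpr (by omega)))
    obtain ⟨c, -, hc⟩ := Nat.exists_mul_mod_eq_one_of_coprime hcv
      (by have : (1:ℕ) ≤ 2 ^ (m + 3) := Nat.one_le_two_pow
          have h8 : (2:ℕ) ^ (m+3) = 8 * 2 ^ m := by ring
          omega)
    obtain ⟨t, ht⟩ : ∃ t, v * c = 2 ^ (m + 3) * t + 1 := by
      refine ⟨v * c / 2 ^ (m + 3), ?_⟩
      have := Nat.div_add_mod (v * c) (2 ^ (m + 3))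
      omega
    have hcodd : Odd c := by
      have heven : Even (2 ^ (m + 3) * t) :=
        Even.mul_right (by rw [show (2:ℕ)^(m+3) = 2*2^(m+2) from by ring]; exact even_two_mul _) t
      have hvc : Odd (v * c) := by rw [ht]; exact heven.add_one
      exact (Nat.odd_mul.mp hvc).2
    set ζ₀ : Lˣ := r ^ c with hzdef
    have hζ₀half : ζ₀ ^ 2 ^ (m + 3) = -1 := by
      obtain ⟨c', hc'⟩ := hcodd
      rw [hzdef, ← pow_mul, show c * 2 ^ (m + 3) = E * c' + 2 ^ (m + 3) from ?_,
        pow_add, pow_mul, hrE, one_pow, one_mul, hr_half]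
      rw [hE2, hc']; ring
    have hζ₀ord : orderOf ζ₀ = E := (hEiff ζ₀).mpr hζ₀half
    have hζ₀E : ζ₀ ^ E = 1 := by rw [← hζ₀ord]; exact pow_orderOf_eq_one ζ₀
    have hζ₀pow : ζ₀ ^ (p - 1) = bu := by
      rw [hzdef, ← pow_mul, show c * (p - 1) = E * t + 2 from ?_, pow_add, pow_mul,
        hrE, one_pow, one_mul, hr2]
      have h1 : c * (p - 1) = 2 * (v * c) := by rw [hpm1]; ring
      rw [h1, ht, hE2]; ring
    -- generic membership lemma for ζ with order E and ζ^(p-1) = bu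
    have hfwd : ∀ ζ : Lˣ, orderOf ζ = E → ζ ^ (p - 1) = bu →
        ((ζ * ω) ∈ S ∧ (ζ * ω) ^ (E * a) = ω) := by
      intro ζ hζord hζpow
      have hζE : ζ ^ E = 1 := by rw [← hζord]; exact pow_orderOf_eq_one ζ
      have hζEL : (ζ : L) ^ 2 ^ (m + 4) = 1 := by
        have := congrArg Units.val hζE
        rw [Units.val_pow_eq_pow_val, Units.val_one, hEdef] at this
        exact this
      have hζhalfL : (ζ : L) ^ 2 ^ (m + 3) = -1 := by
        have := congrArg Units.val ((hEiff ζ).mp hζord)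
        rw [Units.val_pow_eq_pow_val, Units.val_neg, Units.val_one] at this
        exact this
      have htr : Algebra.trace K L ((ζ * ω : Lˣ) : L) = 0 := by
        rw [Units.val_mul]
        rw [key_iff p m u K L hK hL hp1 hu2 hu1 huodd ζ ω hζEL hζhalfL hω]
        have hζpowL : (ζ : L) ^ (p - 1) = -(s ^ (p - 1))⁻¹ := by
          have := congrArg Units.val hζpow
          rw [Units.val_pow_eq_pow_val, hbuval] at this
          exact this
        rw [← hsdef, hζpowL, neg_mul, inv_mul_cancel₀ (pow_ne_zero _ hs0)]
      have hordmul : orderOf (ζ * ω) = 2 * ((p + 1) * (p ^ 2 + 1)) := by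
        rw [(Commute.all ζ ω).orderOf_mul_eq_mul_orderOf_of_coprime
          (by rw [hζord, hω]; exact hcop), hζord, hω, hN]
      have hfib : (ζ * ω) ^ (E * a) = ω := by
        rw [mul_pow, pow_mul, hζE, one_pow, one_mul]
        have : ω ^ (E * a) = ω ^ 1 := (pow_eq_pow_iff_modEq).mpr (by rw [hω]; exact hEa_mod)
        rw [this, pow_one]
      exact ⟨by rw [hSdef, Finset.mem_filter]; exact ⟨Finset.mem_univ _, hordmul, htr⟩, hfib⟩
    -- the two solutions
    have hnegord : orderOf (-ζ₀) = E := by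
      apply (hEiff _).mpr
      have hev : Even (2 ^ (m + 3)) := by
        rw [show (2:ℕ)^(m+3) = 2*2^(m+2) from by ring]; exact even_two_mul _
      rw [hev.neg_pow, hζ₀half]
    have hnegpow : (-ζ₀) ^ (p - 1) = bu := by rw [hevm1.neg_pow, hζ₀pow]
    have hmem1 := hfwd ζ₀ hζ₀ord hζ₀pow
    have hmem2 := hfwd (-ζ₀) hnegord hnegpow
    -- the filter equals the two-element set
    have hset : S.filter (fun ξ => ξ ^ (E * a) = ω) = {ζ₀ * ω, -(ζ₀ * ω)} := by
      ext ξ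
      rw [Finset.mem_filter, Finset.mem_insert, Finset.mem_singleton]
      constructor
      · rintro ⟨hξS, hξfib⟩
        have hmemS := hξS
        rw [hSdef, Finset.mem_filter] at hmemS
        obtain ⟨-, hord, htr⟩ := hmemS
        have hordEu : orderOf ξ = E * u := by rw [hord, hN]
        set ζ : Lˣ := ξ ^ (u * b) with hzeta
        have hdecomp : ζ * ω = ξ := by
          rw [hzeta, ← hξfib, ← pow_add]
          have : ξ ^ (u * b + E * a) = ξ ^ 1 := by
            apply (pow_eq_pow_iff_modEq).mpr
            rw [hordEu]
            apply (Nat.modEq_and_modEq_iff_modEq_mul hcop).mp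
            constructor
            · have h0 : E * a ≡ 0 [MOD E] := (Nat.modEq_zero_iff_dvd).mpr (dvd_mul_right E a)
              have := hub_mod.add h0
              simpa using this
            · have h0 : u * b ≡ 0 [MOD u] := (Nat.modEq_zero_iff_dvd).mpr (dvd_mul_right u b)
              have := h0.add hEa_mod
              simpa using this
          rw [this, pow_one]
        have hζord : orderOf ζ = E := by
          have hgcd : Nat.gcd (u * E) (u * b) = u := by
            rw [Nat.gcd_mul_left, Nat.Coprime.gcd_eq_one (Nat.coprime_comm.mp hb_E), mul_one]
          rw [hzeta, orderOf_pow, hordEu, mul_comm E u, hgcd,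
            Nat.mul_div_cancel_left E (by omega : 0 < u)]
        -- from the trace condition, ζ^(p-1) = bu
        have hζEL : (ζ : L) ^ 2 ^ (m + 4) = 1 := by
          have h1 : ζ ^ E = 1 := by rw [← hζord]; exact pow_orderOf_eq_one ζ
          have := congrArg Units.val h1
          rw [Units.val_pow_eq_pow_val, Units.val_one, hEdef] at this
          exact this
        have hζhalfL : (ζ : L) ^ 2 ^ (m + 3) = -1 := by
          have := congrArg Units.val ((hEiff ζ).mp hζord)
          rw [Units.val_pow_eq_pow_val, Units.val_neg, Units.val_one] at this
          exact this
        have hcond : (ζ : L) ^ (p - 1) * s ^ (p - 1) = -1 := by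
          rw [hsdef]
          rw [← key_iff p m u K L hK hL hp1 hu2 hu1 huodd ζ ω hζEL hζhalfL hω]
          rw [← Units.val_mul, hdecomp]
          exact htr
        have hXB : (ζ : L) ^ (p - 1) = -(s ^ (p - 1))⁻¹ := by
          have hBne : s ^ (p - 1) ≠ 0 := pow_ne_zero _ hs0
          have h1 : (ζ : L) ^ (p - 1) = ((ζ : L) ^ (p - 1) * s ^ (p - 1)) * (s ^ (p - 1))⁻¹ := by
            rw [mul_assoc, mul_inv_cancel₀ hBne, mul_one]
          rw [h1, hcond, neg_mul, one_mul]
        have hζbu : ζ ^ (p - 1) = bu :=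
          Units.ext (by rw [Units.val_pow_eq_pow_val, hXB, hbuval])
        -- hence ζ = ±ζ₀
        have hρ2 : (ζ * ζ₀⁻¹) ^ 2 = 1 := by
          have h1 : (ζ * ζ₀⁻¹) ^ (p - 1) = 1 := by
            rw [mul_pow, inv_pow, hζbu, hζ₀pow, mul_inv_cancel]
          have h2 : (ζ * ζ₀⁻¹) ^ E = 1 := by
            rw [mul_pow, inv_pow, (by rw [← hζord]; exact pow_orderOf_eq_one ζ : ζ ^ E = 1),
              hζ₀E, inv_one, mul_one]
          have h3 : orderOf (ζ * ζ₀⁻¹) ∣ 2 := by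
            have hgcd2 : Nat.gcd (p - 1) E = 2 := by
              rw [hpm1, hE2, Nat.gcd_mul_left, Nat.Coprime.gcd_eq_one hcv, mul_one]
            rw [← hgcd2]
            exact Nat.dvd_gcd (orderOf_dvd_of_pow_eq_one h1) (orderOf_dvd_of_pow_eq_one h2)
          exact orderOf_dvd_iff_pow_eq_one.mp h3
        have hρval : ((ζ * ζ₀⁻¹ : Lˣ) : L) = 1 ∨ ((ζ * ζ₀⁻¹ : Lˣ) : L) = -1 := by
          apply mul_self_eq_one_iff.mp
          have := congrArg Units.val hρ2
          rw [Units.val_pow_eq_pow_val, pow_two, Units.val_one] at this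
          exact this
        rcases hρval with h | h
        · left
          have : ζ * ζ₀⁻¹ = 1 := Units.ext (by simpa using h)
          have hz : ζ = ζ₀ := by
            have := mul_inv_eq_one.mp this
            exact this
          rw [← hdecomp, hz]
        · right
          have : ζ * ζ₀⁻¹ = -1 := Units.ext (by simpa using h)
          have hz : ζ = -ζ₀ := by
            have h1 : ζ = -1 * ζ₀ := by
              rw [← this, mul_assoc, inv_mul_cancel, mul_one]
            rw [h1, neg_one_mul]
          rw [← hdecomp, hz, neg_mul]
      · rintro (rfl | rfl)
        · exact hmem1
        · rw [← neg_mul]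
          exact hmem2
    rw [hset]
    apply Finset.card_pair
    intro h
    have hval := congrArg Units.val h
    rw [Units.val_neg] at hval
    have hz0 : ((ζ₀ * ω : Lˣ) : L) ≠ 0 := Units.ne_zero _
    have h1 : ((ζ₀ * ω : Lˣ) : L) * 1 = ((ζ₀ * ω : Lˣ) : L) * (-1) := by
      rw [mul_one, mul_neg_one]; exact hval
    exact hm1L ((mul_left_cancel₀ hz0 h1).symm)
  -- put everything together
  have hScard : S.card = 2 * Nat.totient u := by
    rw [hsplit, Finset.sum_congr rfl hfiber, Finset.sum_const, smul_eq_mul, hBcard, mul_comm]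
  have htotu : Nat.totient (p ^ 2 + 1) = Nat.totient u := by
    rw [hu2, Nat.totient_mul (by
      exact (Nat.prime_two.coprime_iff_not_dvd).mpr (by omega)), Nat.totient_two, one_mul]
  have htotN : Nat.totient (2 * ((p + 1) * (p ^ 2 + 1))) = 2 ^ (m + 3) * Nat.totient u := by
    rw [hN, hEdef, Nat.totient_mul (by
      exact Nat.Coprime.pow_left _ ((Nat.prime_two.coprime_iff_not_dvd).mpr (by omega))),
      Nat.totient_prime_pow Nat.prime_two (by omega)]
    norm_num
  constructor
  · rw [hncard, hScard, htotN]
    have hpq : (p : ℚ) + 1 = 2 ^ (m + 2) := by exact_mod_cast hp1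
    rw [hpq]
    have h2ne : ((2:ℚ)) ^ (m + 2) ≠ 0 := by positivity
    field_simp
    push_cast
    ring
  · rw [hncard, hScard, htotu]

/-- elements of order `2(p+1)(p²+1)` with absolute trace zero in `F_{p⁴}`,
`p` a Mersenne prime. -/
theorem stmt_19 (p : ℕ) [Fact p.Prime] (hmer : ∃ ℓ : ℕ, ℓ.Prime ∧ p = 2 ^ ℓ - 1)
    (K L : Type) [Field K] [Fintype K] [Field L] [Fintype L] [Algebra K L]
    (hK : Fintype.card K = p) (hL : Fintype.card L = p ^ 4) :
    (Pcount K L (2 * ((p + 1) * (p ^ 2 + 1))) (0 : K) : ℚ) =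
      (Nat.totient (2 * ((p + 1) * (p ^ 2 + 1))) : ℚ) / ((p : ℚ) + 1) ∧
    Pcount K L (2 * ((p + 1) * (p ^ 2 + 1))) (0 : K) = 2 * Nat.totient (p ^ 2 + 1) := by
  have h := stmt_19' p hmer K L hK hL
  unfold Pcount
  exact h
end
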